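/- arXiv:1101.0881 — 4 statements merged into one kernel-verified Lean document; each statement's English description precedes it below -/
import Mathlib

section
/- Let H be a real Hilbert space, {T_n} a sequence of nonexpansive self-mappings of H with a common fixed point, F the (nonempty closed convex) set of common fixed points of {T_n}, and A : H → H a κ-strongly monotone and η-lipschitzian mapping with κ, η > 0 and η² < 2κ. Let {λ_n} be a sequence in [0,1] such that ∑_{n=1}^∞ λ_n = ∞. Suppose that for every pair (x, u) ∈ H × H, the sequence {x_n} defined by x_1 = x and x_{n+1} = λ_n u + (1 − λ_n) T_n x_n for n ∈ ℕ converges strongly to P_F(u). Let y ∈ H and define {y_n} by y_1 = y and y_{n+1} = (I − λ_n A) T_n y_n for n ∈ ℕ. Then {y_n} converges strongly to the unique point z ∈ F satisfying ⟨w − z, Az⟩ ≥ 0 for all w ∈ F. -/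
open RealInnerProductSpace Filter Topology

/-- Standard lemma: if `d (n+1) ≤ (1 - a n) * d n + a n * b n` with `a n ∈ [0,1]`,
`∑ a n = ∞`, `b n → 0`, `b n ≥ 0`, `d n ≥ 0`, then `d n → 0`. -/
lemma aux_rec_tendsto_zero (a b d : ℕ → ℝ) (ha : ∀ n, a n ∈ Set.Icc (0:ℝ) 1)
    (hsum : Tendsto (fun N => ∑ n ∈ Finset.range N, a n) atTop atTop)
    (hb : Tendsto b atTop (𝓝 0)) (hb0 : ∀ n, 0 ≤ b n) (hd0 : ∀ n, 0 ≤ d n)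
    (hrec : ∀ n, d (n+1) ≤ (1 - a n) * d n + a n * b n) :
    Tendsto d atTop (𝓝 0) := by
  rw [Metric.tendsto_atTop]
  intro ε hε
  have hε2 : 0 < ε / 2 := by linarith
  obtain ⟨N, hN⟩ := (Metric.tendsto_atTop.mp hb) (ε/2) hε2
  have hbN : ∀ n ≥ N, b n ≤ ε/2 := by
    intro n hn
    have := hN n hn
    rw [Real.dist_eq, sub_zero] at this
    exact le_of_lt (lt_of_abs_lt this)
  set q : ℕ → ℝ := fun k => Real.exp (-(∑ j ∈ Finset.range k, a (N + j))) with hq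
  have hkey : ∀ k, d (N + k) ≤ q k * d N + ε / 2 := by
    intro k
    induction k with
    | zero =>
      simp [hq]
      linarith
    | succ k ih =>
      have hm := hrec (N + k)
      have hak := ha (N + k)
      have hqk : 0 ≤ q k := le_of_lt (Real.exp_pos _)
      have hbk : b (N + k) ≤ ε / 2 := hbN _ (Nat.le_add_right _ _)
      have hstep : (1 - a (N + k)) * q k ≤ q (k + 1) := by
        have : q (k+1) = q k * Real.exp (-(a (N + k))) := by
          rw [hq]
          simp [Finset.sum_range_succ, neg_add, Real.exp_add, mul_comm]
        rw [this]
        have h1 : 1 - a (N+k) ≤ Real.exp (-(a (N+k))) := by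
          have := Real.add_one_le_exp (-(a (N+k)))
          linarith
        nlinarith [Real.exp_pos (-(a (N+k)))]
      have h2 : d (N + (k+1)) ≤ (1 - a (N+k)) * d (N+k) + a (N+k) * b (N+k) := by
        have : N + (k+1) = (N + k) + 1 := by ring
        rw [this]; exact hm
      have hdN : 0 ≤ d N := hd0 N
      calc d (N + (k+1)) ≤ (1 - a (N+k)) * d (N+k) + a (N+k) * b (N+k) := h2
        _ ≤ (1 - a (N+k)) * (q k * d N + ε/2) + a (N+k) * (ε/2) := by
            have h3 : 0 ≤ 1 - a (N+k) := by linarith [hak.2]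
            have h4 : a (N+k) * b (N+k) ≤ a (N+k) * (ε/2) := by
              exact mul_le_mul_of_nonneg_left hbk hak.1
            nlinarith [ha (N+k), hd0 (N+k), ih]
        _ = (1 - a (N+k)) * q k * d N + ε/2 := by ring
        _ ≤ q (k+1) * d N + ε/2 := by nlinarith
  -- q k * d N → 0
  have hsumtail : Tendsto (fun k => ∑ j ∈ Finset.range k, a (N + j)) atTop atTop := by
    have : ∀ k, ∑ j ∈ Finset.range k, a (N + j)
        = (∑ n ∈ Finset.range (N + k), a n) - ∑ n ∈ Finset.range N, a n := by
      intro k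
      rw [Finset.sum_range_add]
      ring
    simp only [this]
    have h5 : Tendsto (fun k => ∑ n ∈ Finset.range (N + k), a n) atTop atTop := by
      have := hsum.comp (tendsto_add_atTop_nat N)
      exact this.congr (fun k => by show ∑ n ∈ Finset.range (k + N), a n = _; rw [Nat.add_comm])
    simpa [sub_eq_add_neg] using tendsto_atTop_add_const_right atTop (-(∑ n ∈ Finset.range N, a n)) h5
  have hqlim : Tendsto (fun k => q k * d N) atTop (𝓝 0) := by
    have h6 : Tendsto q atTop (𝓝 0) := by
      have hneg : Tendsto (fun k => -(∑ j ∈ Finset.range k, a (N + j))) atTop atBot :=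
        tendsto_neg_atBot_iff.mpr hsumtail
      have h7 := Real.tendsto_exp_atBot.comp hneg
      exact h7
    simpa using h6.mul_const (d N)
  obtain ⟨K, hK⟩ := (Metric.tendsto_atTop.mp hqlim) (ε/4) (by linarith)
  refine ⟨N + K, fun n hn => ?_⟩
  obtain ⟨k, rfl⟩ : ∃ k, n = N + k := ⟨n - N, by omega⟩
  have hkK : k ≥ K := by omega
  have := hK k hkK
  rw [Real.dist_eq, sub_zero] at this
  have h7 : q k * d N < ε/4 := lt_of_abs_lt this
  have h8 := hkey k
  rw [Real.dist_eq, sub_zero, abs_of_nonneg (hd0 _)]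
  linarith

/-- The fixed point set of a nonexpansive map on a real Hilbert space is convex. -/
lemma aux_fix_convex {H : Type*} [NormedAddCommGroup H] [InnerProductSpace ℝ H]
    (S : H → H) (hS : ∀ x y : H, ‖S x - S y‖ ≤ ‖x - y‖) :
    Convex ℝ {z : H | S z = z} := by
  intro x hx y hy s t hs ht hst
  simp only [Set.mem_setOf_eq] at hx hy ⊢
  set m := s • x + t • y with hm
  set u := S m - x with hu
  set v := S m - y with hv
  have hd : u - v = y - x := by rw [hu, hv]; abel
  have hs1 : s = 1 - t := by linarith
  have hmx : m - x = t • (y - x) := by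
    rw [hm, hs1]; module
  have hmy : m - y = s • (x - y) := by
    rw [hm, hs1]; module
  have hun : ‖u‖ ≤ t * ‖y - x‖ := by
    have h1 : ‖S m - S x‖ ≤ ‖m - x‖ := hS m x
    rw [hx] at h1
    calc ‖u‖ ≤ ‖m - x‖ := h1
      _ = t * ‖y - x‖ := by rw [hmx, norm_smul, Real.norm_eq_abs, abs_of_nonneg ht]
  have hvn : ‖v‖ ≤ s * ‖y - x‖ := by
    have h1 : ‖S m - S y‖ ≤ ‖m - y‖ := hS m y
    rw [hy] at h1
    calc ‖v‖ ≤ ‖m - y‖ := h1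
      _ = s * ‖y - x‖ := by
          rw [hmy, norm_smul, Real.norm_eq_abs, abs_of_nonneg hs, norm_sub_rev]
  have hdn : ‖u - v‖ = ‖y - x‖ := by rw [hd]
  -- equality analysis
  have hcs : -( ‖u‖ * ‖v‖) ≤ ⟪u, v⟫ := by
    have := abs_real_inner_le_norm u v
    have := neg_le_of_abs_le this
    linarith
  have hexp : ‖u - v‖ ^ 2 = ‖u‖^2 - 2 * ⟪u, v⟫ + ‖v‖^2 := norm_sub_sq_real u v
  have hun0 : 0 ≤ ‖u‖ := norm_nonneg _
  have hvn0 : 0 ≤ ‖v‖ := norm_nonneg _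
  have hd0 : 0 ≤ ‖y - x‖ := norm_nonneg _
  -- ‖u‖ = t d, ‖v‖ = s d, ⟪u,v⟫ = -‖u‖‖v‖
  have e1 : ‖y - x‖^2 = ‖u‖^2 - 2*⟪u, v⟫ + ‖v‖^2 := by rw [← hdn]; exact hexp
  have e2 : ‖y - x‖^2 ≤ (‖u‖ + ‖v‖)^2 := by nlinarith [hcs]
  have e3 : ‖u‖ + ‖v‖ ≤ ‖y - x‖ := by
    have ht1 : t * ‖y - x‖ + s * ‖y - x‖ = ‖y - x‖ := by
      rw [← add_mul, add_comm t s, hst, one_mul]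
    linarith
  have e2' : ‖y - x‖ ≤ ‖u‖ + ‖v‖ :=
    (pow_le_pow_iff_left₀ hd0 (add_nonneg hun0 hvn0) two_ne_zero).mp e2
  have hsum : ‖u‖ + ‖v‖ = ‖y - x‖ := le_antisymm e3 e2'
  have ht1 : t * ‖y - x‖ + s * ‖y - x‖ = ‖y - x‖ := by
    rw [← add_mul, add_comm t s, hst, one_mul]
  have huev : ‖u‖ = t * ‖y - x‖ ∧ ‖v‖ = s * ‖y - x‖ := by
    constructor <;> linarith
  have e4 : (‖u‖ + ‖v‖)^2 = ‖u‖^2 - 2*⟪u, v⟫ + ‖v‖^2 := by rw [hsum]; exact e1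
  have hinner : ⟪u, v⟫ = -(‖u‖ * ‖v‖) := by nlinarith [e4]
  -- S m - m = s • u + t • v and its norm is zero
  have hfix : S m - m = s • u + t • v := by
    rw [hu, hv, hm, hs1]; module
  have hnorm0 : ‖S m - m‖ ^ 2 = 0 := by
    rw [hfix]
    have hexp2 : ‖s • u + t • v‖ ^ 2
        = s^2 * ‖u‖^2 + 2 * (s * t) * ⟪u, v⟫ + t^2 * ‖v‖^2 := by
      rw [norm_add_sq_real, norm_smul, norm_smul, real_inner_smul_left,
        real_inner_smul_right, Real.norm_eq_abs, Real.norm_eq_abs,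
        abs_of_nonneg hs, abs_of_nonneg ht]
      ring
    rw [hexp2, hinner, huev.1, huev.2]
    ring
  have : S m - m = 0 := by
    have := pow_eq_zero_iff (n := 2) (by norm_num) |>.mp hnorm0
    exact norm_eq_zero.mp this
  have := sub_eq_zero.mp this
  exact this


/-- If every Halpern type iterative sequence `x_{n+1} = λ_n u + (1 - λ_n) T_n x_n`
converges strongly to `P_F u` (where `P_F` is the metric projection onto the set `F`
of common fixed points of the nonexpansive mappings `T_n`), then every sequence
generated by the hybrid steepest descent method `y_{n+1} = (I - λ_n A) T_n y_n`
converges strongly to the unique solution of the variational inequality over `F`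
for `A`. -/
theorem halpern_to_hsdm
    {H : Type*} [NormedAddCommGroup H] [InnerProductSpace ℝ H] [CompleteSpace H]
    (T : ℕ → H → H) (hT : ∀ n, ∀ x y : H, ‖T n x - T n y‖ ≤ ‖x - y‖)
    (F : Set H) (hF : F = {z : H | ∀ n, T n z = z})
    (hFne : F.Nonempty)
    (A : H → H) (κ η : ℝ) (hκ : 0 < κ) (hη : 0 < η) (hκη : η ^ 2 < 2 * κ)
    (hmono : ∀ x y : H, κ * ‖x - y‖ ^ 2 ≤ ⟪x - y, A x - A y⟫)
    (hlip : ∀ x y : H, ‖A x - A y‖ ≤ η * ‖x - y‖)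
    (l : ℕ → ℝ) (hl : ∀ n, l n ∈ Set.Icc (0 : ℝ) 1)
    (hldiv : Tendsto (fun N => ∑ n ∈ Finset.range N, l n) atTop atTop)
    (P : H → H) (hP : ∀ x : H, P x ∈ F ∧ ∀ w ∈ F, ‖x - P x‖ ≤ ‖x - w‖)
    (hHalpern : ∀ u : H, ∀ x : ℕ → H,
      (∀ n, x (n + 1) = l n • u + (1 - l n) • T n (x n)) →
      Tendsto x atTop (𝓝 (P u)))
    (y : ℕ → H)
    (hy : ∀ n, y (n + 1) = T n (y n) - l n • A (T n (y n))) :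
    ∃ z : H, (z ∈ F ∧ ∀ w ∈ F, 0 ≤ ⟪w - z, A z⟫) ∧
      (∀ z' : H, z' ∈ F → (∀ w ∈ F, 0 ≤ ⟪w - z', A z'⟫) → z' = z) ∧
      Tendsto y atTop (𝓝 z) := by

  -- F is convex
  have hFconv : Convex ℝ F := by
    have hF' : F = ⋂ n, {z : H | T n z = z} := by
      rw [hF]; ext z; simp [Set.mem_iInter]
    rw [hF']
    exact convex_iInter (fun n => aux_fix_convex (T n) (hT n))
  -- contraction constant
  set c : ℝ := max (1 - 2*κ + η^2) 0 with hc
  set r : ℝ := Real.sqrt c with hrdef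
  have hc0 : 0 ≤ c := le_max_right _ _
  have hr0 : 0 ≤ r := Real.sqrt_nonneg _
  have hr2 : r^2 = c := Real.sq_sqrt hc0
  have hr1 : r < 1 := by
    have hclt : c < 1 := by
      apply max_lt
      · nlinarith
      · norm_num
    nlinarith
  have hG : ∀ a b : H, ‖(a - A a) - (b - A b)‖ ≤ r * ‖a - b‖ := by
    intro a b
    have h1 : (a - A a) - (b - A b) = (a - b) - (A a - A b) := by abel
    have h2 := norm_sub_sq_real (a - b) (A a - A b)
    have h3 := hmono a b
    have h4 := hlip a b
    have h5 : ‖A a - A b‖^2 ≤ η^2 * ‖a-b‖^2 := by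
      nlinarith [norm_nonneg (A a - A b), norm_nonneg (a-b)]
    have h6 : ‖(a - A a) - (b - A b)‖^2 ≤ (r * ‖a-b‖)^2 := by
      rw [h1, h2, mul_pow, hr2]
      have h7 : 1 - 2*κ + η^2 ≤ c := le_max_left _ _
      nlinarith [norm_nonneg (a - b)]
    exact (pow_le_pow_iff_left₀ (norm_nonneg _)
      (mul_nonneg hr0 (norm_nonneg _)) two_ne_zero).mp h6
  -- projection characterization
  have hPchar : ∀ u : H, ∀ w ∈ F, ⟪u - P u, w - P u⟫ ≤ 0 := by
    intro u w hw
    have hPu := (hP u).1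
    haveI : Nonempty F := hFne.to_subtype
    have hmin : ‖u - P u‖ = ⨅ w : F, ‖u - (w:H)‖ := by
      apply le_antisymm
      · exact le_ciInf (fun w => (hP u).2 w w.2)
      · exact ciInf_le ⟨0, by rintro x ⟨w', rfl⟩; exact norm_nonneg _⟩ (⟨P u, hPu⟩ : F)
    exact ((norm_eq_iInf_iff_real_inner_le_zero hFconv hPu).mp hmin) w hw
  -- P is nonexpansive
  have hPlip : ∀ a b : H, ‖P a - P b‖ ≤ ‖a - b‖ := by
    intro a b
    have h1 := hPchar a (P b) (hP b).1
    have h2 := hPchar b (P a) (hP a).1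
    have idc : ⟪a - b, P a - P b⟫ - ⟪P a - P b, P a - P b⟫
        = -(⟪a - P a, P b - P a⟫ + ⟪b - P b, P a - P b⟫) := by
      simp only [inner_sub_left, inner_sub_right]
      ring
    have hsq : ⟪P a - P b, P a - P b⟫ = ‖P a - P b‖^2 := real_inner_self_eq_norm_sq _
    have key : ‖P a - P b‖^2 ≤ ⟪a - b, P a - P b⟫ := by linarith
    have hcs := real_inner_le_norm (a - b) (P a - P b)
    rcases eq_or_lt_of_le (norm_nonneg (P a - P b)) with h | h
    · rw [← h]; exact norm_nonneg _
    · have h8 : ‖P a - P b‖ * ‖P a - P b‖ ≤ ‖a - b‖ * ‖P a - P b‖ := by nlinarith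
      exact le_of_mul_le_mul_right h8 h
  -- fixed point z of P ∘ (I - A)
  haveI : Nonempty H := ⟨0⟩
  set f : H → H := fun w => P (w - A w) with hfdef
  have hcontr : ContractingWith ⟨r, hr0⟩ f := by
    constructor
    · exact (NNReal.coe_lt_coe (r₁ := ⟨r, hr0⟩) (r₂ := 1)).mp hr1
    · apply LipschitzWith.of_dist_le_mul
      intro a b
      rw [dist_eq_norm, dist_eq_norm]
      calc ‖f a - f b‖ ≤ ‖(a - A a) - (b - A b)‖ := hPlip _ _
        _ ≤ r * ‖a - b‖ := hG a b
  set z : H := ContractingWith.fixedPoint f hcontr with hzdef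
  have hzfix : f z = z := hcontr.fixedPoint_isFixedPt
  have hPz : P (z - A z) = z := hzfix
  have hzF : z ∈ F := by rw [← hPz]; exact (hP _).1
  have hVI : ∀ w ∈ F, 0 ≤ ⟪w - z, A z⟫ := by
    intro w hw
    have h1 := hPchar (z - A z) w hw
    rw [hPz] at h1
    have h2 : (z - A z) - z = -(A z) := by abel
    rw [h2, inner_neg_left] at h1
    rw [real_inner_comm]
    linarith
  have huniq : ∀ z' : H, z' ∈ F → (∀ w ∈ F, 0 ≤ ⟪w - z', A z'⟫) → z' = z := by
    intro z' hz' hVI'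
    have h1 := hVI z' hz'
    have h2 := hVI' z hzF
    have h3 := hmono z' z
    have e1 : ⟪z' - z, A z' - A z⟫ = -⟪z - z', A z'⟫ - ⟪z' - z, A z⟫ := by
      simp only [inner_sub_left, inner_sub_right]
      ring
    have h5 : ‖z' - z‖^2 ≤ 0 := by nlinarith
    have h6 : ‖z' - z‖^2 = 0 := le_antisymm h5 (sq_nonneg _)
    have h7 : z' - z = 0 := norm_eq_zero.mp (pow_eq_zero_iff two_ne_zero |>.mp h6)
    exact sub_eq_zero.mp h7
  -- comparison sequence
  set u : H := z - A z with hu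
  set x : ℕ → H := fun n => Nat.rec (y 0) (fun k xk => l k • u + (1 - l k) • T k xk) n
    with hxdef
  have hxrec : ∀ n, x (n+1) = l n • u + (1 - l n) • T n (x n) := fun n => rfl
  have hxlim : Tendsto x atTop (𝓝 z) := by
    have := hHalpern u x hxrec
    rwa [hu, hPz] at this
  set e : ℕ → ℝ := fun n => ‖x n - z‖ with hedef
  have helim : Tendsto e atTop (𝓝 0) := tendsto_iff_norm_sub_tendsto_zero.mp hxlim
  set d : ℕ → ℝ := fun n => ‖y n - x n‖ with hddef
  have hTz : ∀ n, T n z = z := by rw [hF] at hzF; exact hzF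
  have h1r : (0:ℝ) < 1 - r := by linarith
  have hdrec : ∀ n, d (n+1) ≤ (1 - l n * (1 - r)) * d n
      + (l n * (1 - r)) * ((r / (1 - r)) * e n) := by
    intro n
    have hln := hl n
    have split : y (n+1) - x (n+1)
        = l n • ((T n (y n) - A (T n (y n))) - u) + (1 - l n) • (T n (y n) - T n (x n)) := by
      rw [hy n, hxrec n]; module
    have h1 : ‖(T n (y n) - A (T n (y n))) - u‖ ≤ r * ‖T n (y n) - z‖ := by
      rw [hu]; exact hG (T n (y n)) z
    have h2 : ‖T n (y n) - z‖ ≤ d n + e n := by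
      calc ‖T n (y n) - z‖ = ‖T n (y n) - T n z‖ := by rw [hTz n]
        _ ≤ ‖y n - z‖ := hT n _ _
        _ ≤ d n + e n := by
            rw [show y n - z = (y n - x n) + (x n - z) by abel]
            exact norm_add_le _ _
    have h3 : ‖T n (y n) - T n (x n)‖ ≤ d n := hT n _ _
    have step : d (n+1) ≤ l n * (r * (d n + e n)) + (1 - l n) * d n := by
      have h4 : d (n+1) ≤ l n * ‖(T n (y n) - A (T n (y n))) - u‖
          + (1 - l n) * ‖T n (y n) - T n (x n)‖ := by
        show ‖y (n+1) - x (n+1)‖ ≤ _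
        rw [split]
        refine (norm_add_le _ _).trans ?_
        rw [norm_smul, norm_smul, Real.norm_eq_abs, Real.norm_eq_abs,
          abs_of_nonneg hln.1, abs_of_nonneg (by linarith [hln.2] : (0:ℝ) ≤ 1 - l n)]
      have h5 : ‖(T n (y n) - A (T n (y n))) - u‖ ≤ r * (d n + e n) :=
        h1.trans (mul_le_mul_of_nonneg_left h2 hr0)
      calc d (n+1) ≤ _ := h4
        _ ≤ l n * (r * (d n + e n)) + (1 - l n) * d n :=
          add_le_add (mul_le_mul_of_nonneg_left h5 hln.1)
            (mul_le_mul_of_nonneg_left h3 (by linarith [hln.2]))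
    have hfr : (1:ℝ) - r ≠ 0 := ne_of_gt h1r
    have : l n * (r * (d n + e n)) + (1 - l n) * d n
        = (1 - l n * (1 - r)) * d n + (l n * (1 - r)) * ((r / (1 - r)) * e n) := by
      field_simp
      ring
    linarith [step, this.le, this.ge]
  have hdlim : Tendsto d atTop (𝓝 0) := by
    apply aux_rec_tendsto_zero (fun n => l n * (1 - r)) (fun n => (r / (1 - r)) * e n) d
    · intro n
      have hln := hl n
      constructor
      · exact mul_nonneg hln.1 (by linarith)
      · nlinarith [hln.1, hln.2]
    · have := hldiv.atTop_mul_const h1r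
      simpa [Finset.sum_mul] using this
    · simpa using helim.const_mul (r / (1 - r))
    · intro n
      exact mul_nonneg (div_nonneg hr0 h1r.le) (norm_nonneg _)
    · intro n; exact norm_nonneg _
    · exact hdrec
  have hylim : Tendsto y atTop (𝓝 z) := by
    rw [tendsto_iff_norm_sub_tendsto_zero]
    apply squeeze_zero (fun n => norm_nonneg _) (g := fun n => d n + e n)
    · intro n
      rw [show y n - z = (y n - x n) + (x n - z) by abel]
      exact norm_add_le _ _
    · simpa using hdlim.add helim
  exact ⟨z, ⟨hzF, hVI⟩, huniq, hylim⟩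
end

section
/- Let H be a real Hilbert space, {T_n} a sequence of nonexpansive self-mappings of H with a common fixed point, F the set of common fixed points of {T_n}, and A : H → H a κ-strongly monotone and η-lipschitzian mapping with κ, η > 0 and η² < 2κ. Let {λ_n} be a sequence in [0,1] such that λ_n → 0, ∑_{n=1}^∞ λ_n = ∞, and ∑_{n=1}^∞ |λ_{n+1} − λ_n| < ∞. Suppose that {T_n} satisfies the condition (Z) and that ∑_{n=1}^∞ sup{‖T_{n+1} y − T_n y‖ : y ∈ D} < ∞ for every nonempty bounded subset D of H. Let y ∈ H and define {y_n} by y_1 = y and y_{n+1} = (I − λ_n A) T_n y_n for n ∈ ℕ. Then {y_n} converges strongly to the unique point z ∈ F satisfying ⟨w − z, Az⟩ ≥ 0 for all w ∈ F. -/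
open RealInnerProductSpace Filter Topology Bornology

/-- Contraction property of `x ↦ x - λ • A x`. -/
lemma hsdm_contract {H : Type*} [NormedAddCommGroup H] [InnerProductSpace ℝ H]
    (A : H → H) (κ η : ℝ) (hκ : 0 < κ) (hκη : η ^ 2 < 2 * κ)
    (hmono : ∀ x y : H, κ * ‖x - y‖ ^ 2 ≤ ⟪x - y, A x - A y⟫)
    (hlip : ∀ x y : H, ‖A x - A y‖ ≤ η * ‖x - y‖)
    {c : ℝ} (hc : c = min (2 * κ - η ^ 2) 1 / 2)
    {lam : ℝ} (hlam0 : 0 ≤ lam) (hlam1 : lam ≤ 1) (x y : H) :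
    ‖(x - lam • A x) - (y - lam • A y)‖ ≤ (1 - lam * c) * ‖x - y‖ := by
  have hc0 : 0 < c := by
    rw [hc]
    have h1 : 0 < 2 * κ - η ^ 2 := by linarith
    have : 0 < min (2 * κ - η ^ 2) 1 := lt_min h1 one_pos
    linarith
  have hc2 : 2 * c ≤ 2 * κ - η ^ 2 := by
    rw [hc]; rw [mul_div_cancel₀]; · exact min_le_left _ _
    · norm_num
  have hc1 : c ≤ 1 / 2 := by
    rw [hc]; have := min_le_right (2 * κ - η ^ 2) 1; linarith
  have hpos : 0 ≤ 1 - lam * c := by nlinarith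
  have key : ‖(x - lam • A x) - (y - lam • A y)‖ ^ 2 ≤ ((1 - lam * c) * ‖x - y‖) ^ 2 := by
    have e1 : (x - lam • A x) - (y - lam • A y) = (x - y) - lam • (A x - A y) := by
      rw [smul_sub]; abel
    rw [e1, norm_sub_sq_real, real_inner_smul_right, norm_smul]
    have hAle : ‖A x - A y‖ ^ 2 ≤ η ^ 2 * ‖x - y‖ ^ 2 := by
      have := hlip x y
      nlinarith [norm_nonneg (A x - A y), norm_nonneg (x - y)]
    have hin := hmono x y
    have hl2 : lam ^ 2 ≤ lam := by nlinarith
    have : ‖lam‖ = lam := abs_of_nonneg hlam0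
    rw [this, mul_pow]
    nlinarith [mul_le_mul_of_nonneg_left hin hlam0,
      mul_le_mul_of_nonneg_right hl2 (sq_nonneg ‖A x - A y‖),
      mul_le_mul_of_nonneg_left hAle hlam0,
      mul_le_mul_of_nonneg_right hc2 (mul_nonneg hlam0 (sq_nonneg ‖x - y‖)),
      sq_nonneg (lam * c * ‖x - y‖)]
  have h1 : 0 ≤ (1 - lam * c) * ‖x - y‖ := mul_nonneg hpos (norm_nonneg _)
  nlinarith [norm_nonneg ((x - lam • A x) - (y - lam • A y))]

/-- Xu-type lemma for recursive inequalities. -/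
lemma hsdm_xu (a α : ℕ → ℝ) (ha : ∀ n, 0 ≤ a n) (hα0 : ∀ n, 0 ≤ α n) (hα1 : ∀ n, α n ≤ 1)
    (hdiv : Tendsto (fun n => ∑ k ∈ Finset.range n, α k) atTop atTop)
    (hrec : ∀ ε > (0:ℝ), ∃ N, ∃ b : ℕ → ℝ, (∀ n, 0 ≤ b n) ∧
      (∀ m, ∑ k ∈ Finset.Ico N m, b k ≤ ε) ∧
      ∀ n, N ≤ n → a (n + 1) ≤ (1 - α n) * a n + α n * ε + b n) :
    Tendsto a atTop (𝓝 0) := by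
  rw [Metric.tendsto_atTop]
  intro ε hε
  obtain ⟨N, b, hb0, hbsum, hstep⟩ := hrec (ε / 4) (by linarith)
  -- inductive bound
  have main : ∀ n, N ≤ n → a n ≤ (∏ k ∈ Finset.Ico N n, (1 - α k)) * a N + ε / 4 +
      ∑ k ∈ Finset.Ico N n, b k := by
    intro n hn
    induction n with
    | zero =>
      have : N = 0 := Nat.le_zero.mp hn
      subst this; simp; linarith [ha 0]
    | succ n ih =>
      rcases Nat.lt_or_ge N (n + 1) with h | h
      · have hNn : N ≤ n := Nat.lt_succ_iff.mp h
        have ihn := ih hNn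
        have hstepn := hstep n hNn
        have hP : (0:ℝ) ≤ ∏ k ∈ Finset.Ico N n, (1 - α k) :=
          Finset.prod_nonneg fun k _ => by linarith [hα1 k]
        have hS : (0:ℝ) ≤ ∑ k ∈ Finset.Ico N n, b k :=
          Finset.sum_nonneg fun k _ => hb0 k
        rw [Finset.prod_Ico_succ_top hNn, Finset.sum_Ico_succ_top hNn]
        have h1 : (1 - α n) * a n ≤ (1 - α n) * ((∏ k ∈ Finset.Ico N n, (1 - α k)) * a N
            + ε / 4 + ∑ k ∈ Finset.Ico N n, b k) :=
          mul_le_mul_of_nonneg_left ihn (by linarith [hα1 n])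
        have hα01 := hα0 n
        have hα11 := hα1 n
        nlinarith [ha N, mul_nonneg hP (ha N)]
      · have : N = n + 1 := le_antisymm hn h
        subst this; simp; linarith [ha (n+1)]
  -- the product tends to zero
  have hsum_tendsto : Tendsto (fun n => ∑ k ∈ Finset.Ico N n, α k) atTop atTop := by
    have : ∀ᶠ n in atTop, ∑ k ∈ Finset.Ico N n, α k
        = ∑ k ∈ Finset.range n, α k - ∑ k ∈ Finset.range N, α k := by
      filter_upwards [eventually_ge_atTop N] with n hn
      rw [Finset.sum_Ico_eq_sub _ hn]
    exact Tendsto.congr' (this.mono fun n h => h.symm) (hdiv.atTop_add tendsto_const_nhds)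
  have hprod0 : Tendsto (fun n => (∏ k ∈ Finset.Ico N n, (1 - α k)) * a N) atTop (𝓝 0) := by
    have hPle : ∀ n, (∏ k ∈ Finset.Ico N n, (1 - α k)) * a N
        ≤ Real.exp (-(∑ k ∈ Finset.Ico N n, α k)) * a N := by
      intro n
      refine mul_le_mul_of_nonneg_right ?_ (ha N)
      calc ∏ k ∈ Finset.Ico N n, (1 - α k)
          ≤ ∏ k ∈ Finset.Ico N n, Real.exp (-α k) := by
            refine Finset.prod_le_prod (fun k _ => by linarith [hα1 k]) (fun k _ => ?_)
            have := Real.add_one_le_exp (-α k); linarith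
        _ = Real.exp (-(∑ k ∈ Finset.Ico N n, α k)) := by
            rw [← Real.exp_sum]; congr 1; rw [← Finset.sum_neg_distrib]
    have hPge : ∀ n, 0 ≤ (∏ k ∈ Finset.Ico N n, (1 - α k)) * a N := fun n =>
      mul_nonneg (Finset.prod_nonneg fun k _ => by linarith [hα1 k]) (ha N)
    have hexp : Tendsto (fun n => Real.exp (-(∑ k ∈ Finset.Ico N n, α k)) * a N) atTop (𝓝 0) := by
      have h1 : Tendsto (fun n => Real.exp (-(∑ k ∈ Finset.Ico N n, α k))) atTop (𝓝 0) :=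
        Real.tendsto_exp_atBot.comp (tendsto_neg_atTop_atBot.comp hsum_tendsto)
      simpa using h1.mul_const (a N)
    exact squeeze_zero hPge hPle hexp
  have := (Metric.tendsto_atTop.mp hprod0) (ε / 4) (by linarith)
  obtain ⟨N₂, hN₂⟩ := this
  refine ⟨max N N₂, fun n hn => ?_⟩
  have h1 := main n (le_trans (le_max_left _ _) hn)
  have h2 := hN₂ n (le_trans (le_max_right _ _) hn)
  rw [Real.dist_eq, sub_zero] at h2 ⊢
  have h3 := hbsum n
  rw [abs_of_nonneg (ha n)]
  have h4 : (∏ k ∈ Finset.Ico N n, (1 - α k)) * a N ≤ ε / 4 := le_of_lt (lt_of_abs_lt h2)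
  linarith
/-- The fixed point set of a nonexpansive map on a Hilbert space is convex. -/
lemma hsdm_fixed_convex {H : Type*} [NormedAddCommGroup H] [InnerProductSpace ℝ H]
    (T : H → H) (hT : ∀ x y : H, ‖T x - T y‖ ≤ ‖x - y‖) :
    Convex ℝ {z : H | T z = z} := by
  intro x hx y hy a b ha hb hab
  simp only [Set.mem_setOf_eq] at hx hy ⊢
  set p := a • x + b • y with hp
  set q := T p with hq
  have h1 : ‖q - x‖ ≤ b * ‖y - x‖ := by
    have e : p - x = b • (y - x) := by
      rw [hp, smul_sub]
      have : a = 1 - b := by linarith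
      rw [this]; module
    calc ‖q - x‖ = ‖T p - T x‖ := by rw [hq, hx]
      _ ≤ ‖p - x‖ := hT p x
      _ = b * ‖y - x‖ := by rw [e, norm_smul, Real.norm_eq_abs, abs_of_nonneg hb]
  have h2 : ‖q - y‖ ≤ a * ‖x - y‖ := by
    have e : p - y = a • (x - y) := by
      rw [hp, smul_sub]
      have : b = 1 - a := by linarith
      rw [this]; module
    calc ‖q - y‖ = ‖T p - T y‖ := by rw [hq, hy]
      _ ≤ ‖p - y‖ := hT p y
      _ = a * ‖x - y‖ := by rw [e, norm_smul, Real.norm_eq_abs, abs_of_nonneg ha]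
  have key0 : ∀ u v : H, ‖a • u + b • v‖ ^ 2 = a * ‖u‖ ^ 2 + b * ‖v‖ ^ 2 - a * b * ‖v - u‖ ^ 2 := by
    intro u v
    rw [norm_add_sq_real, norm_sub_sq_real, norm_smul, norm_smul, real_inner_smul_left,
      real_inner_smul_right, Real.norm_eq_abs, Real.norm_eq_abs, abs_of_nonneg ha,
      abs_of_nonneg hb, real_inner_comm v u]
    have h1 : a = 1 - b := by linarith
    rw [h1]; ring
  have key : ‖q - p‖ ^ 2 = a * ‖q - x‖ ^ 2 + b * ‖q - y‖ ^ 2 - a * b * ‖x - y‖ ^ 2 := by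
    have e : q - p = a • (q - x) + b • (q - y) := by
      rw [hp]
      have : a = 1 - b := by linarith
      rw [this]; module
    have exy : x - y = (q - y) - (q - x) := by abel
    rw [e, key0, ← exy]
  have hxy : ‖y - x‖ = ‖x - y‖ := norm_sub_rev _ _
  have hq2 : ‖q - p‖ ^ 2 ≤ 0 := by
    have s1 : ‖q - x‖ ^ 2 ≤ b ^ 2 * ‖x - y‖ ^ 2 := by
      rw [hxy] at h1; nlinarith [norm_nonneg (q - x), norm_nonneg (x-y), mul_nonneg hb (norm_nonneg (x-y))]
    have s2 : ‖q - y‖ ^ 2 ≤ a ^ 2 * ‖x - y‖ ^ 2 := by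
      nlinarith [norm_nonneg (q - y), norm_nonneg (x-y), mul_nonneg ha (norm_nonneg (x-y))]
    have := mul_le_mul_of_nonneg_left s1 ha
    have := mul_le_mul_of_nonneg_left s2 hb
    nlinarith [mul_nonneg (mul_nonneg ha hb) (sq_nonneg ‖x - y‖)]
  have : q = p := by
    have : ‖q - p‖ = 0 := le_antisymm (by nlinarith [norm_nonneg (q - p)]) (norm_nonneg _)
    rwa [norm_sub_eq_zero_iff] at this
  exact this

/-- Metric projection onto a nonempty closed convex set. -/
lemma hsdm_exists_proj {H : Type*} [NormedAddCommGroup H] [InnerProductSpace ℝ H]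
    [CompleteSpace H] {K : Set H} (hne : K.Nonempty) (hcl : IsClosed K) (hconv : Convex ℝ K) :
    ∃ P : H → H, (∀ u, P u ∈ K) ∧ (∀ u, ∀ w ∈ K, ⟪u - P u, w - P u⟫ ≤ 0) ∧
      ∀ u v, ‖P u - P v‖ ≤ ‖u - v‖ := by
  have h : ∀ u : H, ∃ v, v ∈ K ∧ ∀ w ∈ K, ⟪u - v, w - v⟫ ≤ 0 := by
    intro u
    obtain ⟨v, hv, hmin⟩ := exists_norm_eq_iInf_of_complete_convex hne hcl.isComplete hconv u
    exact ⟨v, hv, (norm_eq_iInf_iff_real_inner_le_zero hconv hv).mp hmin⟩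
  choose P hP1 hP2 using h
  refine ⟨P, hP1, hP2, fun u v => ?_⟩
  have f1 := hP2 u (P v) (hP1 v)
  have f2 := hP2 v (P u) (hP1 u)
  have key : ‖P u - P v‖ ^ 2 ≤ ⟪u - v, P u - P v⟫ := by
    have e : u - v = (u - P u) + (P u - P v) + (P v - v) := by abel
    rw [e, inner_add_left, inner_add_left, real_inner_self_eq_norm_sq]
    have g1 : ⟪u - P u, P u - P v⟫ = -⟪u - P u, P v - P u⟫ := by
      rw [← inner_neg_right]; congr 1; abel
    have g2 : ⟪P v - v, P u - P v⟫ = -⟪v - P v, P u - P v⟫ := by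
      rw [← inner_neg_left]; congr 1; abel
    rw [g1, g2]; linarith
  have hcs : ⟪u - v, P u - P v⟫ ≤ ‖u - v‖ * ‖P u - P v‖ := real_inner_le_norm _ _
  rcases eq_or_lt_of_le (norm_nonneg (P u - P v)) with h0 | h0
  · rw [← h0]; exact norm_nonneg _
  · have : ‖P u - P v‖ * ‖P u - P v‖ ≤ ‖u - v‖ * ‖P u - P v‖ := by nlinarith
    exact le_of_mul_le_mul_right this h0

/-- Existence and uniqueness of the solution of the variational inequality. -/
lemma hsdm_exists_vi {H : Type*} [NormedAddCommGroup H] [InnerProductSpace ℝ H]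
    [CompleteSpace H] (A : H → H) (κ η : ℝ) (hκ : 0 < κ) (hκη : η ^ 2 < 2 * κ)
    (hmono : ∀ x y : H, κ * ‖x - y‖ ^ 2 ≤ ⟪x - y, A x - A y⟫)
    (hlip : ∀ x y : H, ‖A x - A y‖ ≤ η * ‖x - y‖)
    {c : ℝ} (hc : c = min (2 * κ - η ^ 2) 1 / 2)
    {K : Set H} (hne : K.Nonempty) (hcl : IsClosed K) (hconv : Convex ℝ K) :
    ∃ z : H, z ∈ K ∧ ∀ w ∈ K, 0 ≤ ⟪w - z, A z⟫ := by
  have hc0 : 0 < c := by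
    rw [hc]
    have h1 : 0 < 2 * κ - η ^ 2 := by linarith
    have : 0 < min (2 * κ - η ^ 2) 1 := lt_min h1 one_pos
    linarith
  have hc1 : c ≤ 1 / 2 := by
    rw [hc]; have := min_le_right (2 * κ - η ^ 2) 1; linarith
  obtain ⟨P, hP1, hP2, hPnon⟩ := hsdm_exists_proj hne hcl hconv
  set Φ : H → H := fun u => P (u - A u) with hΦ
  have hlipΦ : ∀ u v, ‖Φ u - Φ v‖ ≤ (1 - c) * ‖u - v‖ := by
    intro u v
    calc ‖Φ u - Φ v‖ ≤ ‖(u - A u) - (v - A v)‖ := hPnon _ _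
      _ = ‖(u - (1:ℝ) • A u) - (v - (1:ℝ) • A v)‖ := by rw [one_smul, one_smul]
      _ ≤ (1 - 1 * c) * ‖u - v‖ :=
          hsdm_contract A κ η hκ hκη hmono hlip hc zero_le_one le_rfl u v
      _ = (1 - c) * ‖u - v‖ := by ring
  have hcontr : ContractingWith (Real.toNNReal (1 - c)) Φ := by
    constructor
    · rw [← NNReal.coe_lt_one, Real.coe_toNNReal _ (by linarith)]; linarith
    · apply LipschitzWith.of_dist_le_mul
      intro u v
      rw [dist_eq_norm, dist_eq_norm, Real.coe_toNNReal _ (by linarith : (0:ℝ) ≤ 1 - c)]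
      exact hlipΦ u v
  obtain ⟨z, hzfix, -⟩ := hcontr.exists_fixedPoint (0 : H) (edist_ne_top _ _)
  have hzK : z ∈ K := by
    have : Φ z = z := hzfix
    rw [← this, hΦ]; exact hP1 _
  refine ⟨z, hzK, fun w hw => ?_⟩
  have := hP2 (z - A z) w hw
  have hPz : P (z - A z) = z := hzfix
  rw [hPz] at this
  have e : z - A z - z = -(A z) := by abel
  rw [e, inner_neg_left] at this
  have : 0 ≤ ⟪A z, w - z⟫ := by linarith
  rwa [real_inner_comm] at this

open RealInnerProductSpace Filter Topology Bornology

/-- Weak sequential compactness of bounded sequences in a Hilbert space. -/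
lemma hsdm_weak_cluster {H : Type*} [NormedAddCommGroup H] [InnerProductSpace ℝ H]
    [CompleteSpace H] (x : ℕ → H) (R : ℝ) (hx : ∀ n, ‖x n‖ ≤ R) :
    ∃ p : H, ∃ φ : ℕ → ℕ, StrictMono φ ∧
      ∀ v : H, Tendsto (fun k => ⟪x (φ k) - p, v⟫) atTop (𝓝 0) := by
  have hR0 : 0 ≤ R := le_trans (norm_nonneg _) (hx 0)
  set U : Ultrafilter ℕ := Ultrafilter.of atTop with hUdef
  have hU : (U : Filter ℕ) ≤ atTop := Ultrafilter.of_le _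
  -- limits along the ultrafilter
  have hlim : ∀ v : H, ∃ cst : ℝ, Tendsto (fun n => ⟪x n, v⟫) U (𝓝 cst) := by
    intro v
    have hmem : ∀ n, ⟪x n, v⟫ ∈ Set.Icc (-(R * ‖v‖)) (R * ‖v‖) := by
      intro n
      have h1 : |⟪x n, v⟫| ≤ R * ‖v‖ := by
        refine le_trans (abs_real_inner_le_norm _ _) ?_
        exact mul_le_mul_of_nonneg_right (hx n) (norm_nonneg v)
      exact abs_le.mp h1
    have hle : ↑(U.map fun n => ⟪x n, v⟫) ≤ 𝓟 (Set.Icc (-(R * ‖v‖)) (R * ‖v‖)) := by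
      rw [Filter.le_principal_iff]
      exact Filter.mem_map.mpr (Filter.Eventually.of_forall hmem)
    obtain ⟨cst, -, hcst⟩ := (isCompact_Icc).ultrafilter_le_nhds _ hle
    exact ⟨cst, hcst⟩
  choose f hf using hlim
  -- the limit functional is linear and bounded; Riesz representation
  have hadd : ∀ v w : H, f (v + w) = f v + f w := by
    intro v w
    refine tendsto_nhds_unique (hf (v + w)) ?_
    have := (hf v).add (hf w)
    exact this.congr fun n => (inner_add_right _ _ _).symm
  have hsmul : ∀ (r : ℝ) (v : H), f (r • v) = r * f v := by
    intro r v
    refine tendsto_nhds_unique (hf (r • v)) ?_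
    have := (hf v).const_mul r
    exact this.congr fun n => (real_inner_smul_right _ _ _).symm
  have hbound : ∀ v : H, |f v| ≤ R * ‖v‖ := by
    intro v
    refine le_of_tendsto (hf v).abs (Filter.Eventually.of_forall fun n => ?_)
    refine le_trans (abs_real_inner_le_norm _ _) ?_
    exact mul_le_mul_of_nonneg_right (hx n) (norm_nonneg v)
  let flin : H →L[ℝ] ℝ := LinearMap.mkContinuous
    { toFun := f, map_add' := hadd, map_smul' := hsmul } R
    (fun v => by rw [Real.norm_eq_abs]; exact hbound v)
  set p : H := (InnerProductSpace.toDual ℝ H).symm flin with hpdef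
  have hp : ∀ v : H, ⟪p, v⟫ = f v := by
    intro v
    have h1 : InnerProductSpace.toDual ℝ H p v = ⟪p, v⟫ := InnerProductSpace.toDual_apply_apply
    rw [← h1, hpdef, LinearIsometryEquiv.apply_symm_apply]
    rfl
  have hweak : ∀ v : H, Tendsto (fun n => ⟪x n - p, v⟫) U (𝓝 0) := by
    intro v
    have h1 := (hf v).sub_const (f v)
    rw [sub_self] at h1
    refine h1.congr fun n => ?_
    rw [inner_sub_left, hp v]
  -- separable closed subspace containing everything
  set s : Set H := Set.range x ∪ {p} with hsdef
  have hscount : s.Countable := (Set.countable_range x).union (Set.countable_singleton p)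
  have hsep : TopologicalSpace.IsSeparable (Submodule.span ℝ s : Set H) :=
    (hscount.isSeparable).span
  obtain ⟨D, hDcount, hDsub⟩ := hsep
  obtain ⟨d, hd⟩ := Set.Countable.exists_eq_range (hDcount.insert 0)
    (Set.insert_nonempty _ _)
  have hdense : (Submodule.span ℝ s : Set H) ⊆ closure (Set.range d) := by
    refine hDsub.trans (closure_mono ?_)
    rw [← hd]
    exact Set.subset_insert _ _
  set K : Submodule ℝ H := (Submodule.span ℝ s).topologicalClosure with hKdef
  have hclosure_sub : (K : Set H) ⊆ closure (Set.range d) := by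
    rw [hKdef, Submodule.topologicalClosure_coe]
    exact closure_minimal hdense isClosed_closure
  have hxK : ∀ n, x n ∈ K := fun n =>
    Submodule.le_topologicalClosure _ (Submodule.subset_span (Or.inl ⟨n, rfl⟩))
  have hpK : p ∈ K :=
    Submodule.le_topologicalClosure _ (Submodule.subset_span (Or.inr rfl))
  -- choose the subsequence
  have hsel : ∀ (k m : ℕ), ∃ n, m < n ∧ ∀ i ≤ k, |⟪x n - p, d i⟫| < 1 / (k + 1 : ℝ) := by
    intro k m
    have hek : (0:ℝ) < 1 / (k + 1 : ℝ) := by positivity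
    have h1 : ∀ᶠ n in (U : Filter ℕ), ∀ i ∈ Set.Iic k, |⟪x n - p, d i⟫| < 1 / (k + 1 : ℝ) := by
      rw [eventually_all_finite (Set.finite_Iic k)]
      intro i _
      have h2 := Metric.tendsto_nhds.mp (hweak (d i)) _ hek
      refine h2.mono fun n hn => ?_
      rwa [Real.dist_eq, sub_zero] at hn
    have h2 : ∀ᶠ n in (U : Filter ℕ), m < n := (eventually_gt_atTop m).filter_mono hU
    obtain ⟨n, hn1, hn2⟩ := (h2.and h1).exists
    exact ⟨n, hn1, fun i hi => hn2 i hi⟩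
  let φ : ℕ → ℕ := fun k => Nat.rec ((hsel 0 0).choose) (fun k ih => (hsel (k + 1) ih).choose) k
  have hφsucc : ∀ k, φ (k + 1) = (hsel (k + 1) (φ k)).choose := fun k => rfl
  have hφmono : StrictMono φ :=
    strictMono_nat_of_lt_succ fun k => (hsel (k + 1) (φ k)).choose_spec.1
  have hφprop : ∀ k, ∀ i ≤ k, |⟪x (φ k) - p, d i⟫| < 1 / (k + 1 : ℝ) := by
    intro k
    cases k with
    | zero => exact (hsel 0 0).choose_spec.2
    | succ k => exact (hsel (k + 1) (φ k)).choose_spec.2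
  refine ⟨p, φ, hφmono, ?_⟩
  -- convergence for v in the closure of the range of d
  have hconv1 : ∀ v ∈ closure (Set.range d),
      Tendsto (fun k => ⟪x (φ k) - p, v⟫) atTop (𝓝 0) := by
    intro v hv
    rw [Metric.tendsto_atTop]
    intro ε hε
    set B := R + ‖p‖ + 1 with hBdef
    have hB : 0 < B := by positivity
    have hB2 : (0:ℝ) < ε / (2 * B) := by positivity
    obtain ⟨w, hw, hwd⟩ := Metric.mem_closure_iff.mp hv _ hB2
    obtain ⟨i, rfl⟩ := hw
    obtain ⟨K₀, hK₀⟩ := exists_nat_one_div_lt (show (0:ℝ) < ε / 2 by positivity)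
    refine ⟨max i K₀, fun k hk => ?_⟩
    have hik : i ≤ k := le_trans (le_max_left _ _) hk
    have hKk : K₀ ≤ k := le_trans (le_max_right _ _) hk
    have e1 : ⟪x (φ k) - p, v⟫ = ⟪x (φ k) - p, d i⟫ + ⟪x (φ k) - p, v - d i⟫ := by
      rw [← inner_add_right]; congr 1; abel
    have h1 : |⟪x (φ k) - p, d i⟫| < ε / 2 := by
      refine lt_of_lt_of_le (hφprop k i hik) (le_trans ?_ (le_of_lt hK₀))
      have : (K₀ : ℝ) + 1 ≤ (k : ℝ) + 1 := by exact_mod_cast Nat.add_le_add_right hKk 1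
      exact one_div_le_one_div_of_le (by positivity) this
    have h2 : |⟪x (φ k) - p, v - d i⟫| < ε / 2 := by
      have hnorm : ‖x (φ k) - p‖ ≤ R + ‖p‖ :=
        le_trans (norm_sub_le _ _) (add_le_add_left (hx _) _)
      have hvd : ‖v - d i‖ < ε / (2 * B) := by rwa [← dist_eq_norm]
      calc |⟪x (φ k) - p, v - d i⟫| ≤ ‖x (φ k) - p‖ * ‖v - d i‖ := abs_real_inner_le_norm _ _
        _ ≤ B * ‖v - d i‖ := by
            refine mul_le_mul_of_nonneg_right ?_ (norm_nonneg _)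
            rw [hBdef]; linarith
        _ < B * (ε / (2 * B)) := by
            exact mul_lt_mul_of_pos_left hvd hB
        _ = ε / 2 := by field_simp
    rw [Real.dist_eq, sub_zero, e1]
    calc |⟪x (φ k) - p, d i⟫ + ⟪x (φ k) - p, v - d i⟫|
        ≤ |⟪x (φ k) - p, d i⟫| + |⟪x (φ k) - p, v - d i⟫| := abs_add_le _ _
      _ < ε / 2 + ε / 2 := add_lt_add h1 h2
      _ = ε := by ring
  -- general v via orthogonal projection onto K
  intro v
  set Pv : H := (K.orthogonalProjectionOnto v : H) with hPvdef
  have hPvK : Pv ∈ K := SetLike.coe_mem _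
  have hsplit : ∀ k, ⟪x (φ k) - p, v⟫ = ⟪x (φ k) - p, Pv⟫ := by
    intro k
    have hmem : x (φ k) - p ∈ K := Submodule.sub_mem _ (hxK _) hpK
    have horth : ⟪x (φ k) - p, v - Pv⟫ = 0 :=
      Submodule.inner_right_of_mem_orthogonal hmem
        (K.sub_starProjection_mem_orthogonal v)
    have := inner_sub_right (𝕜 := ℝ) (x (φ k) - p) v Pv
    rw [horth] at this
    linarith [this]
  have := hconv1 Pv (hclosure_sub hPvK)
  exact Tendsto.congr (fun k => (hsplit k).symm) this
/-- Tail sums of a summable nonnegative series are eventually small. -/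
lemma hsdm_tail (b : ℕ → ℝ) (hb : Summable b) (ε : ℝ) (hε : 0 < ε) :
    ∃ N, ∀ m, ∑ k ∈ Finset.Ico N m, b k ≤ ε := by
  have hS := hb.hasSum.tendsto_sum_nat
  obtain ⟨N, hN⟩ := Metric.tendsto_atTop.mp hS (ε / 2) (half_pos hε)
  refine ⟨N, fun m => ?_⟩
  rcases le_or_gt N m with h | h
  · rw [Finset.sum_Ico_eq_sub _ h]
    have h1 := hN m h
    have h2 := hN N le_rfl
    rw [Real.dist_eq] at h1 h2
    have := abs_lt.mp h1
    have := abs_lt.mp h2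
    linarith [(abs_lt.mp h1).1, (abs_lt.mp h1).2, (abs_lt.mp h2).1, (abs_lt.mp h2).2]
  · rw [Finset.Ico_eq_empty (by omega)]
    simp; linarith
set_option maxHeartbeats 1000000 in
/-- Convergence of the hybrid steepest descent method
`y_{n+1} = (I - λ_n A) T_n y_n` under the condition (Z) and the summability
condition on `{T_n}`: the sequence `{y_n}` converges strongly to the unique
solution of the variational inequality over the common fixed point set `F`. -/
theorem hsdm_convergence_aktt
    {H : Type*} [NormedAddCommGroup H] [InnerProductSpace ℝ H] [CompleteSpace H]
    (T : ℕ → H → H) (hT : ∀ n, ∀ x y : H, ‖T n x - T n y‖ ≤ ‖x - y‖)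
    (F : Set H) (hF : F = {z : H | ∀ n, T n z = z})
    (hFne : F.Nonempty)
    (A : H → H) (κ η : ℝ) (hκ : 0 < κ) (hη : 0 < η) (hκη : η ^ 2 < 2 * κ)
    (hmono : ∀ x y : H, κ * ‖x - y‖ ^ 2 ≤ ⟪x - y, A x - A y⟫)
    (hlip : ∀ x y : H, ‖A x - A y‖ ≤ η * ‖x - y‖)
    (l : ℕ → ℝ) (hl : ∀ n, l n ∈ Set.Icc (0 : ℝ) 1)
    (hl0 : Tendsto l atTop (𝓝 0))
    (hldiv : Tendsto (fun N => ∑ n ∈ Finset.range N, l n) atTop atTop)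
    (hldiff : Summable fun n => |l (n + 1) - l n|)
    -- condition (Z): every weak cluster point of a bounded sequence `{x_n}` with
    -- `x_n - T_n x_n → 0` is a common fixed point of `{T_n}`
    (hZ : ∀ x : ℕ → H, IsBounded (Set.range x) →
      Tendsto (fun n => x n - T n (x n)) atTop (𝓝 0) →
      ∀ p : H, (∃ φ : ℕ → ℕ, StrictMono φ ∧
        ∀ v : H, Tendsto (fun k => ⟪x (φ k) - p, v⟫) atTop (𝓝 0)) →
      p ∈ F)
    (haktt : ∀ D : Set H, D.Nonempty → IsBounded D →
      Summable fun n => ⨆ yy ∈ D, ‖T (n + 1) yy - T n yy‖)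
    (y : ℕ → H)
    (hy : ∀ n, y (n + 1) = T n (y n) - l n • A (T n (y n))) :
    ∃ z : H, (z ∈ F ∧ ∀ w ∈ F, 0 ≤ ⟪w - z, A z⟫) ∧
      (∀ z' : H, z' ∈ F → (∀ w ∈ F, 0 ≤ ⟪w - z', A z'⟫) → z' = z) ∧
      Tendsto y atTop (𝓝 z) := by
  -- the contraction constant
  set c : ℝ := min (2 * κ - η ^ 2) 1 / 2 with hcdef
  have hc0 : 0 < c := by
    rw [hcdef]
    have h1 : 0 < 2 * κ - η ^ 2 := by linarith
    have : 0 < min (2 * κ - η ^ 2) 1 := lt_min h1 one_pos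
    linarith
  have hc1 : c ≤ 1 / 2 := by
    rw [hcdef]; have := min_le_right (2 * κ - η ^ 2) 1; linarith
  have hlc : ∀ n, l n * c ≤ 1 / 2 := fun n => by
    have h := mul_le_mul (hl n).2 hc1 (le_of_lt hc0) zero_le_one
    linarith
  have contract := fun (lam : ℝ) (h0 : 0 ≤ lam) (h1 : lam ≤ 1) =>
    hsdm_contract A κ η hκ hκη hmono hlip hcdef h0 h1
  -- F is closed and convex
  have hFeq : F = ⋂ n, {z : H | T n z = z} := by
    rw [hF]; ext w; simp [Set.mem_iInter]
  have hTcont : ∀ n, Continuous (T n) := by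
    intro n
    refine (LipschitzWith.of_dist_le_mul (K := 1) fun a b => ?_).continuous
    rw [dist_eq_norm, dist_eq_norm, NNReal.coe_one, one_mul]
    exact hT n a b
  have hFclosed : IsClosed F := by
    rw [hFeq]
    exact isClosed_iInter fun n => isClosed_eq (hTcont n) continuous_id
  have hFconv : Convex ℝ F := by
    rw [hFeq]
    exact convex_iInter fun n => hsdm_fixed_convex (T n) (hT n)
  have hTfix : ∀ n, ∀ w ∈ F, T n w = w := by
    intro n w hw; rw [hF] at hw; exact hw n
  -- the solution of the variational inequality
  obtain ⟨z, hzF, hzVI⟩ :=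
    hsdm_exists_vi A κ η hκ hκη hmono hlip hcdef hFne hFclosed hFconv
  have huniq : ∀ z' : H, z' ∈ F → (∀ w ∈ F, 0 ≤ ⟪w - z', A z'⟫) → z' = z := by
    intro z' hz'F hz'VI
    have h1 : 0 ≤ ⟪z' - z, A z⟫ := hzVI z' hz'F
    have h2 : 0 ≤ ⟪z - z', A z'⟫ := hz'VI z hzF
    have h3 : ⟪z - z', A z'⟫ = -⟪z' - z, A z'⟫ := by
      rw [← inner_neg_left]; congr 1; abel
    have h4 : ⟪z' - z, A z' - A z⟫ ≤ 0 := by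
      rw [inner_sub_right]; linarith [h3 ▸ h2]
    have h5 := hmono z' z
    have h6 : ‖z' - z‖ ^ 2 ≤ 0 := by nlinarith
    have : ‖z' - z‖ = 0 := le_antisymm (by nlinarith [norm_nonneg (z' - z)]) (norm_nonneg _)
    rw [norm_sub_eq_zero_iff] at this
    exact this
  refine ⟨z, ⟨hzF, hzVI⟩, huniq, ?_⟩
  -- boundedness of the iterates
  set M : ℝ := max ‖y 0 - z‖ (‖A z‖ / c) with hMdef
  have hM0 : 0 ≤ M := le_trans (norm_nonneg _) (le_max_left _ _)
  have hMz : ‖A z‖ ≤ c * M := by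
    have h1 : ‖A z‖ / c ≤ M := le_max_right _ _
    calc ‖A z‖ = c * (‖A z‖ / c) := by field_simp
      _ ≤ c * M := mul_le_mul_of_nonneg_left h1 (le_of_lt hc0)
  have hbd : ∀ n, ‖y n - z‖ ≤ M := by
    intro n
    induction n with
    | zero => exact le_max_left _ _
    | succ n ih =>
      have hln := hl n
      have e : y (n + 1) - z =
          ((T n (y n) - l n • A (T n (y n))) - (z - l n • A z)) - l n • A z := by
        rw [hy n]; abel
      have h1 : ‖(T n (y n) - l n • A (T n (y n))) - (z - l n • A z)‖
          ≤ (1 - l n * c) * ‖T n (y n) - z‖ := contract (l n) hln.1 hln.2 _ _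
      have h2 : ‖T n (y n) - z‖ ≤ ‖y n - z‖ := by
        calc ‖T n (y n) - z‖ = ‖T n (y n) - T n z‖ := by rw [hTfix n z hzF]
          _ ≤ ‖y n - z‖ := hT n _ _
      have h3 : ‖y (n + 1) - z‖ ≤ (1 - l n * c) * ‖y n - z‖ + l n * ‖A z‖ := by
        rw [e]
        refine le_trans (norm_sub_le _ _) ?_
        rw [norm_smul, Real.norm_eq_abs, abs_of_nonneg hln.1]
        have hpos : 0 ≤ 1 - l n * c := by have := hlc n; linarith
        have := mul_le_mul_of_nonneg_left (le_trans h2 ih) hpos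
        have h1' := le_trans h1 (mul_le_mul_of_nonneg_left h2 hpos)
        nlinarith [mul_le_mul_of_nonneg_left ih hpos]
      have h4 : l n * ‖A z‖ ≤ l n * (c * M) := mul_le_mul_of_nonneg_left hMz hln.1
      have hpos : 0 ≤ 1 - l n * c := by have := hlc n; linarith
      have h5 := mul_le_mul_of_nonneg_left ih hpos
      nlinarith
  set R : ℝ := M + ‖z‖ with hRdef
  have hyR : ∀ n, ‖y n‖ ≤ R := fun n => by
    calc ‖y n‖ = ‖(y n - z) + z‖ := by congr 1; abel
      _ ≤ ‖y n - z‖ + ‖z‖ := norm_add_le _ _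
      _ ≤ M + ‖z‖ := add_le_add_left (hbd n) _
  have hTyM : ∀ n, ‖T n (y n) - z‖ ≤ M := fun n => by
    calc ‖T n (y n) - z‖ = ‖T n (y n) - T n z‖ := by rw [hTfix n z hzF]
      _ ≤ ‖y n - z‖ := hT n _ _
      _ ≤ M := hbd n
  set RA : ℝ := η * M + ‖A z‖ with hRAdef
  have hARA : ∀ n, ‖A (T n (y n))‖ ≤ RA := fun n => by
    calc ‖A (T n (y n))‖ = ‖(A (T n (y n)) - A z) + A z‖ := by congr 1; abel
      _ ≤ ‖A (T n (y n)) - A z‖ + ‖A z‖ := norm_add_le _ _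
      _ ≤ η * ‖T n (y n) - z‖ + ‖A z‖ := add_le_add_left (hlip _ _) _
      _ ≤ η * M + ‖A z‖ := add_le_add_left
          (mul_le_mul_of_nonneg_left (hTyM n) (le_of_lt hη)) _
  have hRA0 : 0 ≤ RA := le_trans (norm_nonneg _) (hARA 0)
  have hR0 : 0 ≤ R := le_trans (norm_nonneg _) (hyR 0)
  -- the sup-difference sequence
  set D : Set H := Metric.closedBall (0 : H) R with hDdef
  have hDne : D.Nonempty := ⟨0, by simp [hDdef, hR0]⟩
  have hDbd : IsBounded D := Metric.isBounded_closedBall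
  set s : ℕ → ℝ := fun n => ⨆ yy ∈ D, ‖T (n + 1) yy - T n yy‖ with hsdef
  have hs_summ : Summable s := haktt D hDne hDbd
  have hsle : ∀ n, ∀ w ∈ D, ‖T (n + 1) w - T n w‖ ≤ s n := by
    intro n w hw
    have hbdd : BddAbove (Set.range fun yy => ⨆ _ : yy ∈ D, ‖T (n + 1) yy - T n yy‖) := by
      refine ⟨max (2 * R + ‖T (n + 1) 0 - T n 0‖) 0, ?_⟩
      rintro r ⟨yy, rfl⟩
      show (⨆ _ : yy ∈ D, ‖T (n + 1) yy - T n yy‖) ≤ _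
      by_cases hyy : yy ∈ D
      · rw [ciSup_pos hyy]
        refine le_max_of_le_left ?_
        have hyyR : ‖yy‖ ≤ R := by
          have := Metric.mem_closedBall.mp hyy
          rwa [dist_zero_right] at this
        calc ‖T (n + 1) yy - T n yy‖
            = ‖(T (n + 1) yy - T (n + 1) 0) + (T (n + 1) 0 - T n 0) + (T n 0 - T n yy)‖ := by
              congr 1; abel
          _ ≤ ‖T (n + 1) yy - T (n + 1) 0‖ + ‖T (n + 1) 0 - T n 0‖ + ‖T n 0 - T n yy‖ :=
              le_trans (norm_add_le _ _) (add_le_add_left (norm_add_le _ _) _)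
          _ ≤ ‖yy - 0‖ + ‖T (n + 1) 0 - T n 0‖ + ‖0 - yy‖ :=
              add_le_add (add_le_add (hT (n + 1) yy 0) le_rfl) (hT n 0 yy)
          _ ≤ 2 * R + ‖T (n + 1) 0 - T n 0‖ := by
              rw [sub_zero, zero_sub, norm_neg]; linarith
      · have hE : IsEmpty (yy ∈ D) := ⟨hyy⟩
        rw [Real.iSup_of_isEmpty]
        exact le_max_right _ _
    calc ‖T (n + 1) w - T n w‖ = ⨆ _ : w ∈ D, ‖T (n + 1) w - T n w‖ := by rw [ciSup_pos hw]
      _ ≤ s n := le_ciSup hbdd w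
  have hs0 : ∀ n, 0 ≤ s n :=
    fun n => le_trans (norm_nonneg _) (hsle n 0 (by simp [hDdef, hR0]))
  have hyD : ∀ n, y n ∈ D := fun n => by
    rw [hDdef, Metric.mem_closedBall, dist_zero_right]; exact hyR n
  -- the successive differences tend to zero
  have hdiv2 : Tendsto (fun n => ∑ k ∈ Finset.range n, l (k + 1) * c) atTop atTop := by
    have e : ∀ n, ∑ k ∈ Finset.range n, l (k + 1) * c
        = (∑ k ∈ Finset.range (n + 1), l k + -(l 0)) * c := by
      intro n
      rw [Finset.sum_range_succ', ← Finset.sum_mul]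
      ring
    refine Tendsto.congr (fun n => (e n).symm) ?_
    refine Tendsto.atTop_mul_const hc0 ?_
    exact tendsto_atTop_add_const_right _ _ (hldiv.comp (tendsto_add_atTop_nat 1))
  have hdtend : Tendsto (fun n => ‖y (n + 1) - y n‖) atTop (𝓝 0) := by
    refine hsdm_xu _ (fun n => l (n + 1) * c) (fun n => norm_nonneg _)
      (fun n => mul_nonneg (hl (n + 1)).1 (le_of_lt hc0))
      (fun n => by show l (n + 1) * c ≤ 1; have := hlc (n + 1); linarith) hdiv2 ?_
    intro ε hε
    obtain ⟨N, hN⟩ := hsdm_tail (fun n => s n + RA * |l (n + 1) - l n|)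
      (hs_summ.add (hldiff.mul_left RA)) ε hε
    refine ⟨N, _, fun n => add_nonneg (hs0 n) (mul_nonneg hRA0 (abs_nonneg _)), hN, ?_⟩
    intro n _
    show ‖y (n + 1 + 1) - y (n + 1)‖ ≤ (1 - l (n + 1) * c) * ‖y (n + 1) - y n‖
      + (l (n + 1) * c) * ε + (s n + RA * |l (n + 1) - l n|)
    have hln := hl n
    have hln1 := hl (n + 1)
    have e : y (n + 2) - y (n + 1) =
        ((T (n + 1) (y (n + 1)) - l (n + 1) • A (T (n + 1) (y (n + 1))))
          - (T n (y n) - l (n + 1) • A (T n (y n))))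
        + (l n - l (n + 1)) • A (T n (y n)) := by
      rw [hy (n + 1), hy n, sub_smul]; abel
    have h1 : ‖(T (n + 1) (y (n + 1)) - l (n + 1) • A (T (n + 1) (y (n + 1))))
          - (T n (y n) - l (n + 1) • A (T n (y n)))‖
        ≤ (1 - l (n + 1) * c) * ‖T (n + 1) (y (n + 1)) - T n (y n)‖ :=
      contract (l (n + 1)) hln1.1 hln1.2 _ _
    have h2 : ‖T (n + 1) (y (n + 1)) - T n (y n)‖ ≤ ‖y (n + 1) - y n‖ + s n := by
      calc ‖T (n + 1) (y (n + 1)) - T n (y n)‖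
          = ‖(T (n + 1) (y (n + 1)) - T (n + 1) (y n)) + (T (n + 1) (y n) - T n (y n))‖ := by
            congr 1; abel
        _ ≤ ‖T (n + 1) (y (n + 1)) - T (n + 1) (y n)‖ + ‖T (n + 1) (y n) - T n (y n)‖ :=
            norm_add_le _ _
        _ ≤ ‖y (n + 1) - y n‖ + s n :=
            add_le_add (hT (n + 1) _ _) (hsle n (y n) (hyD n))
    have h3 : ‖(l n - l (n + 1)) • A (T n (y n))‖ ≤ RA * |l (n + 1) - l n| := by
      rw [norm_smul, Real.norm_eq_abs, abs_sub_comm]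
      exact mul_le_mul (le_refl _) (hARA n) (norm_nonneg _) (abs_nonneg _) |>.trans
        (by rw [mul_comm])
    have hpos : 0 ≤ 1 - l (n + 1) * c := by have := hlc (n + 1); linarith
    calc ‖y (n + 1 + 1) - y (n + 1)‖
        ≤ (1 - l (n + 1) * c) * ‖T (n + 1) (y (n + 1)) - T n (y n)‖
          + ‖(l n - l (n + 1)) • A (T n (y n))‖ := by
          rw [show n + 1 + 1 = n + 2 from rfl, e]
          exact le_trans (norm_add_le _ _) (add_le_add_left h1 _)
      _ ≤ (1 - l (n + 1) * c) * (‖y (n + 1) - y n‖ + s n) + RA * |l (n + 1) - l n| :=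
          add_le_add (mul_le_mul_of_nonneg_left h2 hpos) h3
      _ ≤ (1 - l (n + 1) * c) * ‖y (n + 1) - y n‖ + (l (n + 1) * c) * ε
            + (s n + RA * |l (n + 1) - l n|) := by
          have h4 : (1 - l (n + 1) * c) * s n ≤ s n := by
            nlinarith [hs0 n, mul_nonneg hln1.1 (le_of_lt hc0)]
          have h5 : 0 ≤ (l (n + 1) * c) * ε :=
            mul_nonneg (mul_nonneg hln1.1 (le_of_lt hc0)) (le_of_lt hε)
          nlinarith
  -- y n - T n (y n) → 0
  have hyT : Tendsto (fun n => y n - T n (y n)) atTop (𝓝 0) := by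
    have hbound : ∀ n, ‖y n - T n (y n)‖ ≤ ‖y (n + 1) - y n‖ + l n * RA := by
      intro n
      have e : y n - T n (y n) = -(y (n + 1) - y n) + -(l n • A (T n (y n))) := by
        rw [hy n]; abel
      rw [e]
      refine le_trans (norm_add_le _ _) ?_
      rw [norm_neg, norm_neg, norm_smul, Real.norm_eq_abs, abs_of_nonneg (hl n).1]
      exact add_le_add_right (mul_le_mul_of_nonneg_left (hARA n) (hl n).1) _
    have hg : Tendsto (fun n => ‖y (n + 1) - y n‖ + l n * RA) atTop (𝓝 0) := by
      have := hdtend.add (hl0.mul_const RA)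
      simpa using this
    exact squeeze_zero_norm hbound hg
  have hybdd : IsBounded (Set.range y) := by
    rw [isBounded_iff_forall_norm_le]
    exact ⟨R, by rintro _ ⟨n, rfl⟩; exact hyR n⟩
  -- limsup step via condition (Z)
  have hlimsup : ∀ ε > (0:ℝ), ∀ᶠ n in atTop, ⟪y n - z, -(A z)⟫ ≤ ε := by
    intro ε hε
    by_contra hcon
    rw [Filter.not_eventually] at hcon
    have hfreq : ∃ᶠ n in atTop, ε < ⟪y n - z, -(A z)⟫ :=
      hcon.mono fun n hn => lt_of_not_ge hn
    obtain ⟨ψ, hψmono, hψ⟩ := Filter.extraction_of_frequently_atTop hfreq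
    obtain ⟨p, σ, hσmono, hσ⟩ := hsdm_weak_cluster (fun m => y (ψ m)) R (fun m => hyR (ψ m))
    have hpF : p ∈ F := by
      refine hZ y hybdd hyT p ⟨ψ ∘ σ, hψmono.comp hσmono, fun v => ?_⟩
      exact hσ v
    have hlim2 : Tendsto (fun k => ⟪y (ψ (σ k)) - z, -(A z)⟫) atTop (𝓝 ⟪p - z, -(A z)⟫) := by
      have h1 := (hσ (-(A z))).add_const ⟪p - z, -(A z)⟫
      rw [zero_add] at h1
      refine h1.congr fun k => ?_
      rw [← inner_add_left]; congr 1; abel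
    have hle : ε ≤ ⟪p - z, -(A z)⟫ :=
      ge_of_tendsto hlim2 (Filter.Eventually.of_forall fun k => (hψ (σ k)).le)
    have hVI := hzVI p hpF
    have : ⟪p - z, -(A z)⟫ = -⟪p - z, A z⟫ := inner_neg_right _ _
    linarith
  -- final convergence: ‖y n - z‖² → 0
  have hdiv1 : Tendsto (fun n => ∑ k ∈ Finset.range n, l k * c) atTop atTop := by
    have e : ∀ n, ∑ k ∈ Finset.range n, l k * c = (∑ k ∈ Finset.range n, l k) * c :=
      fun n => (Finset.sum_mul _ _ _).symm
    exact Tendsto.congr (fun n => (e n).symm) (Tendsto.atTop_mul_const hc0 hldiv)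
  have hsq : Tendsto (fun n => ‖y n - z‖ ^ 2) atTop (𝓝 0) := by
    refine hsdm_xu _ (fun n => l n * c) (fun n => sq_nonneg _)
      (fun n => mul_nonneg (hl n).1 (le_of_lt hc0))
      (fun n => by show l n * c ≤ 1; have := hlc n; linarith) hdiv1 ?_
    intro ε hε
    obtain ⟨N, hN⟩ := (eventually_atTop.mp (hlimsup (c * ε / 2) (by positivity)))
    refine ⟨N, fun _ => 0, fun n => le_rfl, fun m => by simp; linarith, ?_⟩
    intro n hn
    show ‖y (n + 1) - z‖ ^ 2 ≤ (1 - l n * c) * ‖y n - z‖ ^ 2 + (l n * c) * ε + 0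
    have hln := hl n
    set g : H := (T n (y n) - l n • A (T n (y n))) - (z - l n • A z) with hgdef
    have e : y (n + 1) - z = g - l n • A z := by
      rw [hgdef, hy n]; abel
    have hpos : 0 ≤ 1 - l n * c := by have := hlc n; linarith
    have h2 : ‖T n (y n) - z‖ ≤ ‖y n - z‖ := by
      calc ‖T n (y n) - z‖ = ‖T n (y n) - T n z‖ := by rw [hTfix n z hzF]
        _ ≤ ‖y n - z‖ := hT n _ _
    have hg : ‖g‖ ≤ (1 - l n * c) * ‖y n - z‖ :=
      le_trans (contract (l n) hln.1 hln.2 _ _) (mul_le_mul_of_nonneg_left h2 hpos)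
    have hexp : ‖y (n + 1) - z‖ ^ 2
        = ‖g‖ ^ 2 - 2 * (l n * ⟪g, A z⟫) + (l n) ^ 2 * ‖A z‖ ^ 2 := by
      rw [e, norm_sub_sq_real, real_inner_smul_right, norm_smul, Real.norm_eq_abs,
        abs_of_nonneg hln.1, mul_pow]
    have hginner : ⟪g, A z⟫ = ⟪y (n + 1) - z, A z⟫ + l n * ‖A z‖ ^ 2 := by
      have e2 : g = (y (n + 1) - z) + l n • A z := by rw [e]; abel
      rw [e2, inner_add_left, real_inner_smul_left, real_inner_self_eq_norm_sq]
    have hsle2 : ⟪y (n + 1) - z, -(A z)⟫ ≤ c * ε / 2 := hN (n + 1) (by omega)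
    have hgsq : ‖g‖ ^ 2 ≤ (1 - l n * c) * ‖y n - z‖ ^ 2 := by
      have h7 : ‖g‖ ^ 2 ≤ ((1 - l n * c) * ‖y n - z‖) ^ 2 := by
        nlinarith [norm_nonneg g, mul_nonneg hpos (norm_nonneg (y n - z))]
      nlinarith [h7, sq_nonneg ‖y n - z‖,
        mul_nonneg (mul_nonneg hpos (mul_nonneg hln.1 (le_of_lt hc0))) (sq_nonneg ‖y n - z‖)]
    have hinner_le : 2 * (l n * ⟪y (n + 1) - z, -(A z)⟫) ≤ l n * c * ε := by
      nlinarith [mul_le_mul_of_nonneg_left hsle2 hln.1]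
    have hmain : ‖y (n + 1) - z‖ ^ 2
        = ‖g‖ ^ 2 + 2 * (l n * ⟪y (n + 1) - z, -(A z)⟫) - (l n) ^ 2 * ‖A z‖ ^ 2 := by
      rw [hexp, hginner, inner_neg_right]; ring
    have hAz2 : 0 ≤ (l n) ^ 2 * ‖A z‖ ^ 2 := mul_nonneg (sq_nonneg _) (sq_nonneg _)
    calc ‖y (n + 1) - z‖ ^ 2
        ≤ (1 - l n * c) * ‖y n - z‖ ^ 2 + l n * c * ε := by linarith
      _ ≤ (1 - l n * c) * ‖y n - z‖ ^ 2 + (l n * c) * ε + 0 := by linarith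
  -- conclude strong convergence
  have hnorm0 : Tendsto (fun n => ‖y n - z‖) atTop (𝓝 0) := by
    have h1 := (Real.continuous_sqrt.tendsto 0).comp hsq
    rw [Real.sqrt_zero] at h1
    refine h1.congr fun n => Real.sqrt_sq (norm_nonneg _)
  exact tendsto_iff_norm_sub_tendsto_zero.mpr hnorm0
end

section
/- (Iemoto–Takahashi) Let H be a real Hilbert space, {T_n} a sequence of nonexpansive self-mappings of H with a common fixed point, F the set of common fixed points of {T_n}, and A : H → H a κ-strongly monotone and η-lipschitzian mapping with κ, η > 0 and η² < 2κ. Let {λ_n} be a sequence in [0,1] with λ_n → 0 and ∑_{n=1}^∞ λ_n = ∞, and let {γ_n} be a sequence in [a, b] with 0 < a ≤ b < 1. For each n ∈ ℕ and k ∈ {1, 2, …, n+1}, define the mapping U_{n,k} : H → H by U_{n,n+1} = I and U_{n,k} = γ_k T_k U_{n,k+1} + (1 − γ_k) I. Let y ∈ H and define {y_n} by y_1 = y and y_{n+1} = (I − λ_n A) U_{n,1} y_n for n ∈ ℕ. Then {y_n} converges strongly to the unique point z ∈ F satisfying ⟨w − z, Az⟩ ≥ 0 for all w ∈ F. -/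
open RealInnerProductSpace Filter Topology

section aux
variable {H : Type*} [NormedAddCommGroup H] [InnerProductSpace ℝ H]

/-- convex combination identity -/
lemma norm_combo_sq (γ : ℝ) (u v : H) :
    ‖γ • u + (1 - γ) • v‖ ^ 2
      = γ * ‖u‖ ^ 2 + (1 - γ) * ‖v‖ ^ 2 - γ * (1 - γ) * ‖u - v‖ ^ 2 := by
  have h1 := norm_add_sq_real (γ • u) ((1 - γ) • v)
  have h2 := norm_sub_sq_real u v
  have h3 : inner ℝ (γ • u) ((1-γ) • v) = γ * ((1-γ) * (inner ℝ u v : ℝ)) := by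
    rw [real_inner_smul_left, real_inner_smul_right]
  have h4 : ‖γ • u‖ ^ 2 = γ ^ 2 * ‖u‖ ^ 2 := by
    rw [norm_smul, mul_pow, Real.norm_eq_abs, sq_abs]
  have h5 : ‖(1-γ) • v‖ ^ 2 = (1-γ) ^ 2 * ‖v‖ ^ 2 := by
    rw [norm_smul, mul_pow, Real.norm_eq_abs, sq_abs]
  rw [h1, h3, h4, h5]
  nlinarith [h2]

/-- if squares tend to zero so does the (nonneg) sequence -/
lemma tendsto_of_sq_tendsto {f : ℕ → ℝ} (hf : ∀ n, 0 ≤ f n)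
    (h : Tendsto (fun n => f n ^ 2) atTop (𝓝 0)) : Tendsto f atTop (𝓝 0) := by
  have : Tendsto (fun n => Real.sqrt (f n ^ 2)) atTop (𝓝 (Real.sqrt 0)) :=
    (Real.continuous_sqrt.tendsto 0).comp h
  simpa [Real.sqrt_sq (hf _), Real.sqrt_zero] using this

/-- Xu-type recursion lemma -/
lemma xu_aux {s l : ℕ → ℝ} {τ c : ℝ} (hτ : 0 < τ)
    (hl0 : ∀ n, 0 ≤ l n) (hfac : ∀ n, 0 ≤ 1 - l n * τ)
    (hdiv : Tendsto (fun N => ∑ n ∈ Finset.range N, l n) atTop atTop)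
    (N : ℕ) (hrec : ∀ n, N ≤ n → s (n+1) ≤ (1 - l n * τ) * s n + l n * τ * c)
    {ε : ℝ} (hε : 0 < ε) : ∀ᶠ n in atTop, s n < c + ε := by
  set M := max (s N - c) 0 with hM
  set P : ℕ → ℝ := fun n => ∏ k ∈ Finset.Ico N n, (1 - l k * τ) with hP
  have hMnn : 0 ≤ M := le_max_right _ _
  have hPnn : ∀ n, 0 ≤ P n := fun n => Finset.prod_nonneg fun k _ => hfac k
  have key : ∀ n, N ≤ n → s n ≤ c + M * P n := by
    intro n hn
    induction n, hn using Nat.le_induction with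
    | base => simp [hP, Finset.Ico_self, hM]; nlinarith [le_max_left (s N - c) 0]
    | succ n hn ih =>
      have hPs : P (n+1) = P n * (1 - l n * τ) := Finset.prod_Ico_succ_top hn _
      calc s (n+1) ≤ (1 - l n * τ) * s n + l n * τ * c := hrec n hn
        _ ≤ (1 - l n * τ) * (c + M * P n) + l n * τ * c := by
            nlinarith [hfac n, ih]
        _ = c + M * P (n+1) := by rw [hPs]; ring
  have hPle : ∀ n, N ≤ n → P n ≤ Real.exp (-τ * (∑ k ∈ Finset.range n, l k - ∑ k ∈ Finset.range N, l k)) := by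
    intro n hn
    have : P n ≤ ∏ k ∈ Finset.Ico N n, Real.exp (-(l k * τ)) := by
      apply Finset.prod_le_prod (fun k _ => hfac k)
      intro k _
      have := Real.add_one_le_exp (-(l k * τ))
      linarith
    rw [← Real.exp_sum] at this
    refine this.trans_eq ?_
    congr 1
    rw [← Finset.sum_Ico_eq_sub _ hn, Finset.mul_sum]
    exact Finset.sum_congr rfl fun k _ => by ring
  have hPtend : Tendsto P atTop (𝓝 0) := by
    have h1 : Tendsto (fun n => (∑ k ∈ Finset.range n, l k - ∑ k ∈ Finset.range N, l k)) atTop atTop :=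
      tendsto_atTop_add_const_right _ _ hdiv
    have h2 : Tendsto (fun n => -τ * (∑ k ∈ Finset.range n, l k - ∑ k ∈ Finset.range N, l k)) atTop atBot :=
      Tendsto.const_mul_atTop_of_neg (by linarith) h1
    have h3 : Tendsto (fun n => Real.exp (-τ * (∑ k ∈ Finset.range n, l k - ∑ k ∈ Finset.range N, l k))) atTop (𝓝 0) :=
      Real.tendsto_exp_atBot.comp h2
    apply squeeze_zero' (Eventually.of_forall hPnn) _ h3
    filter_upwards [eventually_ge_atTop N] with n hn using hPle n hn
  have : Tendsto (fun n => M * P n) atTop (𝓝 0) := by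
    simpa using hPtend.const_mul M
  have hev : ∀ᶠ n in atTop, M * P n < ε := by
    have := this.eventually (eventually_lt_nhds hε) -- maybe wrong name
    exact this
  filter_upwards [hev, eventually_ge_atTop N] with n h1 h2
  have := key n h2
  linarith


/-- squared contraction estimate for I - l•A -/
lemma contraction_sq {A : H → H} {κ η : ℝ} (hη : 0 ≤ η)
    (hmono : ∀ x y : H, κ * ‖x - y‖ ^ 2 ≤ ⟪x - y, A x - A y⟫)
    (hlip : ∀ x y : H, ‖A x - A y‖ ≤ η * ‖x - y‖)
    {l : ℝ} (hl0 : 0 ≤ l) (hl1 : l ≤ 1) (x y : H) :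
    ‖(x - l • A x) - (y - l • A y)‖ ^ 2 ≤ (1 - l * (2*κ - η^2)) * ‖x - y‖ ^ 2 := by
  have hexp : (x - l • A x) - (y - l • A y) = (x - y) - l • (A x - A y) := by
    rw [smul_sub]; abel
  rw [hexp, norm_sub_sq_real, real_inner_smul_right]
  have h1 : κ * ‖x - y‖ ^ 2 ≤ ⟪x - y, A x - A y⟫ := hmono x y
  have h2 : ‖A x - A y‖ ≤ η * ‖x - y‖ := hlip x y
  have h3 : ‖l • (A x - A y)‖ ^ 2 ≤ l * η^2 * ‖x - y‖ ^ 2 := by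
    rw [norm_smul, Real.norm_eq_abs, abs_of_nonneg hl0]
    have hn : 0 ≤ ‖A x - A y‖ := norm_nonneg _
    have hsn : 0 ≤ ‖x - y‖ := norm_nonneg _
    have h4 : ‖A x - A y‖ ^ 2 ≤ (η * ‖x - y‖) ^ 2 := by nlinarith
    have h5 : l^2 ≤ l := by nlinarith
    calc (l * ‖A x - A y‖) ^ 2 = l^2 * ‖A x - A y‖^2 := by ring
      _ ≤ l * (η * ‖x - y‖)^2 := by nlinarith [sq_nonneg (η * ‖x - y‖)]
      _ = l * η^2 * ‖x - y‖^2 := by ring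
  nlinarith [norm_nonneg (x - y)]

/-- norm contraction estimate -/
lemma contraction_norm {A : H → H} {κ η : ℝ} (hη : 0 ≤ η)
    (hmono : ∀ x y : H, κ * ‖x - y‖ ^ 2 ≤ ⟪x - y, A x - A y⟫)
    (hlip : ∀ x y : H, ‖A x - A y‖ ≤ η * ‖x - y‖)
    {l : ℝ} (hl0 : 0 ≤ l) (hl1 : l ≤ 1) (x y : H) :
    ‖(x - l • A x) - (y - l • A y)‖ ≤ (1 - l * (2*κ - η^2)/2) * ‖x - y‖ := by
  have h := contraction_sq hη hmono hlip hl0 hl1 x y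
  set D := ‖(x - l • A x) - (y - l • A y)‖ with hD
  set s := ‖x - y‖ with hs
  have hDnn : 0 ≤ D := norm_nonneg _
  have hsnn : 0 ≤ s := norm_nonneg _
  rcases eq_or_lt_of_le hsnn with h0 | h0
  · rw [← h0] at h ⊢
    have hD2 : D ^ 2 ≤ 0 := by linarith [h, mul_zero (1 - l * (2*κ - η^2))]; 
    have : D = 0 := by nlinarith
    simp [this]
  · have hs2 : 0 < s^2 := by positivity
    have hfac : 0 ≤ 1 - l * (2*κ - η^2) := by nlinarith [sq_nonneg D]
    nlinarith [sq_nonneg (l * (2*κ - η^2) * s), sq_nonneg (D + (1 - l * (2*κ - η^2)/2) * s), sq_nonneg (D - (1 - l * (2*κ - η^2)/2) * s)]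

/-- the fixed point set of a nonexpansive map is convex -/
lemma fixed_convex {T : H → H} (hT : ∀ x y : H, ‖T x - T y‖ ≤ ‖x - y‖) :
    Convex ℝ {x : H | T x = x} := by
  intro x hx y hy α β hα hβ hαβ
  simp only [Set.mem_setOf_eq] at hx hy ⊢
  set p := α • x + β • y with hp
  have hβ1 : β = 1 - α := by linarith
  have hcombo : T p - p = α • (T p - x) + (1 - α) • (T p - y) := by
    rw [hβ1] at hp; rw [hp, smul_sub, smul_sub]; module
  have hid := norm_combo_sq α (T p - x) (T p - y)
  have hdiff : (T p - x) - (T p - y) = y - x := by abel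
  have h1 : ‖T p - x‖ ≤ (1 - α) * ‖y - x‖ := by
    calc ‖T p - x‖ = ‖T p - T x‖ := by rw [hx]
      _ ≤ ‖p - x‖ := hT p x
      _ = (1 - α) * ‖y - x‖ := by
          rw [hβ1] at hp
          have : p - x = (1 - α) • (y - x) := by rw [hp]; module
          rw [this, norm_smul, Real.norm_eq_abs, abs_of_nonneg (by linarith)]
  have h2 : ‖T p - y‖ ≤ α * ‖y - x‖ := by
    calc ‖T p - y‖ = ‖T p - T y‖ := by rw [hy]
      _ ≤ ‖p - y‖ := hT p y
      _ = α * ‖y - x‖ := by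
          rw [hβ1] at hp
          have : p - y = α • (x - y) := by rw [hp]; module
          rw [this, norm_smul, Real.norm_eq_abs, abs_of_nonneg hα, norm_sub_rev]
  rw [hdiff] at hid
  rw [← hcombo] at hid
  have hα1 : (0:ℝ) ≤ 1 - α := by linarith
  have hN := norm_nonneg (y - x)
  have h1' : ‖T p - x‖^2 ≤ (1-α)^2 * ‖y-x‖^2 := by nlinarith [norm_nonneg (T p - x)]
  have h2' : ‖T p - y‖^2 ≤ α^2 * ‖y-x‖^2 := by nlinarith [norm_nonneg (T p - y)]
  have hTp : ‖T p - p‖ ^ 2 ≤ 0 := by nlinarith [mul_le_mul_of_nonneg_left h1' hα, mul_le_mul_of_nonneg_left h2' hα1]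
  have : ‖T p - p‖ = 0 := by nlinarith [norm_nonneg (T p - p), sq_nonneg ‖T p - p‖]
  have := norm_eq_zero.mp this
  rw [sub_eq_zero] at this
  exact this


lemma vi_exists [CompleteSpace H] {F : Set H} (hne : F.Nonempty) (hcl : IsClosed F)
    (hconv : Convex ℝ F) {A : H → H} {κ η : ℝ} (hκ : 0 < κ) (hη : 0 < η) (hκη : η^2 < 2*κ)
    (hmono : ∀ x y : H, κ * ‖x - y‖ ^ 2 ≤ ⟪x - y, A x - A y⟫)
    (hlip : ∀ x y : H, ‖A x - A y‖ ≤ η * ‖x - y‖) :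
    ∃ z ∈ F, ∀ w ∈ F, 0 ≤ ⟪w - z, A z⟫ := by
  have hcomp : IsComplete F := hcl.isComplete
  have hproj : ∀ u : H, ∃ v, v ∈ F ∧ ∀ w ∈ F, ⟪u - v, w - v⟫ ≤ 0 := by
    intro u
    obtain ⟨v, hvF, hv⟩ := exists_norm_eq_iInf_of_complete_convex hne hcomp hconv u
    exact ⟨v, hvF, (norm_eq_iInf_iff_real_inner_le_zero hconv hvF).mp hv⟩
  choose P hPF hPvar using hproj
  have hPne : ∀ u v : H, ‖P u - P v‖ ≤ ‖u - v‖ := by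
    intro u v
    have A1 : ⟪u - P u, P v - P u⟫ ≤ 0 := hPvar u (P v) (hPF v)
    have A2 : ⟪v - P v, P u - P v⟫ ≤ 0 := hPvar v (P u) (hPF u)
    have key : ‖P u - P v‖^2 ≤ ⟪u - v, P u - P v⟫ := by
      have h1 : ⟪u - v, P u - P v⟫ - ‖P u - P v‖^2 = ⟪(u - P u) - (v - P v), P u - P v⟫ := by
        rw [show ((u - P u) - (v - P v) : H) = (u - v) - (P u - P v) by abel,
          ← real_inner_self_eq_norm_sq]
        simp only [inner_sub_left]
      have h2 : ⟪(u - P u) - (v - P v), P u - P v⟫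
          = (- ⟪u - P u, P v - P u⟫) + (- ⟪v - P v, P u - P v⟫) := by
        rw [inner_sub_left]
        rw [show ⟪u - P u, P u - P v⟫ = - ⟪u - P u, P v - P u⟫ by
          rw [show (P u - P v : H) = -(P v - P u) by abel, inner_neg_right]]
        ring
      nlinarith
    have cs := real_inner_le_norm (u - v) (P u - P v)
    rcases eq_or_lt_of_le (norm_nonneg (P u - P v)) with h0 | h0
    · rw [← h0]; exact norm_nonneg _
    · nlinarith
  -- contraction G := P ∘ (I - A)
  set τ := 2*κ - η^2 with hτdef
  have hτ : 0 < τ := by simp [hτdef]; nlinarith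
  set c := Real.sqrt (max (1 - τ) 0) with hc
  have hc0 : 0 ≤ c := Real.sqrt_nonneg _
  have hcsq : c^2 = max (1 - τ) 0 := Real.sq_sqrt (le_max_right _ _)
  have hc1 : c < 1 := by
    have hm : max (1 - τ) 0 < 1 := by rw [max_lt_iff]; constructor <;> linarith
    nlinarith
  set G : H → H := fun x => P (x - A x) with hG
  have hGF : ∀ x, G x ∈ F := fun x => hPF _
  have hGc : ∀ x y : H, ‖G x - G y‖ ≤ c * ‖x - y‖ := by
    intro x y
    have h1 : ‖G x - G y‖ ≤ ‖(x - A x) - (y - A y)‖ := hPne _ _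
    have h2 : ‖(x - (1:ℝ) • A x) - (y - (1:ℝ) • A y)‖ ^ 2 ≤ (1 - 1 * (2*κ - η^2)) * ‖x - y‖ ^ 2 :=
      contraction_sq (le_of_lt hη) hmono hlip (by norm_num) (by norm_num) x y
    simp only [one_smul, one_mul] at h2
    have h3 : (1 - (2*κ - η^2)) * ‖x - y‖ ^ 2 ≤ (max (1 - τ) 0) * ‖x - y‖ ^ 2 := by
      apply mul_le_mul_of_nonneg_right (le_max_left _ _) (sq_nonneg _)
    have h4 := hcsq
    have h5 : ‖(x - A x) - (y - A y)‖ ^ 2 ≤ (c * ‖x - y‖)^2 := by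
      rw [mul_pow, h4]; calc ‖(x - A x) - (y - A y)‖ ^ 2 ≤ (1 - (2*κ - η^2)) * ‖x - y‖ ^ 2 := h2
        _ ≤ _ := by rw [hτdef] at h3 ⊢; exact h3
    have h6 : 0 ≤ c * ‖x - y‖ := mul_nonneg hc0 (norm_nonneg _)
    nlinarith [norm_nonneg ((x - A x) - (y - A y)), h1]
  -- Banach fixed point
  have hlip' : LipschitzWith c.toNNReal G := by
    apply LipschitzWith.of_dist_le_mul
    intro x y
    rw [dist_eq_norm, dist_eq_norm, Real.coe_toNNReal c hc0]
    exact hGc x y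
  have hcontr : ContractingWith c.toNNReal G := by
    constructor
    · rw [← NNReal.coe_lt_coe, Real.coe_toNNReal c hc0]; exact_mod_cast hc1
    · exact hlip'
  obtain ⟨z, hzfix, -, -⟩ := hcontr.exists_fixedPoint hne.choose (edist_ne_top _ _)
  have hzG : G z = z := hzfix
  have hzF : z ∈ F := hzG ▸ hGF z
  refine ⟨z, hzF, fun w hw => ?_⟩
  have := hPvar (z - A z) w hw
  rw [show P (z - A z) = z from hzG] at this
  have h7 : ⟪z - A z - z, w - z⟫ = - ⟪w - z, A z⟫ := by
    rw [show (z - A z - z : H) = -(A z) by abel, inner_neg_left, real_inner_comm]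
  linarith [h7 ▸ this]

lemma key_limsup [CompleteSpace H] {x : ℕ → H} {W : H → H}
    (hW : ∀ u v : H, ‖W u - W v‖ ≤ ‖u - v‖)
    (hx : Tendsto (fun n => ‖x n - W (x n)‖) atTop (𝓝 0))
    {C : ℝ} (hC : ∀ n, ‖x n‖ ≤ C)
    {g z : H} (hfix : ∀ u, W u = u → ⟪g, u - z⟫ ≤ 0)
    {ε : ℝ} (hε : 0 < ε) : ∀ᶠ n in atTop, ⟪g, x n - z⟫ < ε := by
  by_contra hcon
  rw [Filter.not_eventually] at hcon
  have hC0 : 0 ≤ C := le_trans (norm_nonneg (x 0)) (hC 0)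
  have hne : (atTop ⊓ 𝓟 {n | ¬ (⟪g, x n - z⟫ < ε)}).NeBot := frequently_iff_neBot.mp hcon
  set Uf := Ultrafilter.of (atTop ⊓ 𝓟 {n | ¬ (⟪g, x n - z⟫ < ε)}) with hUf
  have hle : (Uf : Filter ℕ) ≤ atTop ⊓ 𝓟 {n | ¬ (⟪g, x n - z⟫ < ε)} := Ultrafilter.of_le _
  have hU_atTop : (Uf : Filter ℕ) ≤ atTop := hle.trans inf_le_left
  have hU_S : ∀ᶠ n in (Uf : Filter ℕ), ε ≤ ⟪g, x n - z⟫ := by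
    have h1 : {n | ¬ (⟪g, x n - z⟫ < ε)} ∈ (Uf : Filter ℕ) :=
      le_principal_iff.mp (hle.trans inf_le_right)
    filter_upwards [h1] with n hn
    exact not_lt.mp hn
  have hlim : ∀ v : H, ∃ r : ℝ, Tendsto (fun n => ⟪x n, v⟫) (Uf : Filter ℕ) (𝓝 r) := by
    intro v
    have hcomp : IsCompact (Set.Icc (-(C*‖v‖)) (C*‖v‖)) := isCompact_Icc
    have hmem : (Ultrafilter.map (fun n => ⟪x n, v⟫) Uf : Filter ℝ) ≤ 𝓟 (Set.Icc (-(C*‖v‖)) (C*‖v‖)) := by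
      rw [le_principal_iff]
      rw [Ultrafilter.coe_map, Filter.mem_map]
      apply Filter.univ_mem'
      intro n
      simp only [Set.mem_preimage, Set.mem_Icc]
      have h1 : |(⟪x n, v⟫ : ℝ)| ≤ ‖x n‖ * ‖v‖ := abs_real_inner_le_norm _ _
      have h2 : ‖x n‖ * ‖v‖ ≤ C * ‖v‖ := mul_le_mul_of_nonneg_right (hC n) (norm_nonneg v)
      constructor <;> [linarith [neg_abs_le (⟪x n, v⟫ : ℝ)]; linarith [le_abs_self (⟪x n, v⟫ : ℝ)]]
    obtain ⟨r, -, hr⟩ := hcomp.ultrafilter_le_nhds _ hmem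
    rw [Ultrafilter.coe_map] at hr
    exact ⟨r, hr⟩
  choose Φ hΦ using hlim
  have hadd : ∀ v w, Φ (v + w) = Φ v + Φ w := by
    intro v w
    refine tendsto_nhds_unique (hΦ (v+w)) ?_
    have := (hΦ v).add (hΦ w)
    simpa [inner_add_right] using this
  have hsmul : ∀ (r : ℝ) (v : H), Φ (r • v) = r * Φ v := by
    intro r v
    refine tendsto_nhds_unique (hΦ (r • v)) ?_
    have := (hΦ v).const_mul r
    simpa [real_inner_smul_right] using this
  have hbnd : ∀ v, ‖Φ v‖ ≤ C * ‖v‖ := by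
    intro v
    rw [Real.norm_eq_abs]
    apply le_of_tendsto (hΦ v).abs
    apply Eventually.of_forall
    intro n
    calc |(⟪x n, v⟫ : ℝ)| ≤ ‖x n‖ * ‖v‖ := abs_real_inner_le_norm _ _
      _ ≤ C * ‖v‖ := mul_le_mul_of_nonneg_right (hC n) (norm_nonneg v)
  have hrepr : ∃ u : H, ∀ v : H, ⟪u, v⟫ = Φ v := by
    refine ⟨(InnerProductSpace.toDual ℝ H).symm
      (LinearMap.mkContinuous ⟨⟨Φ, hadd⟩, hsmul⟩ C hbnd), fun v => ?_⟩
    rw [InnerProductSpace.toDual_symm_apply]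
    rfl
  obtain ⟨u, huv⟩ := hrepr
  have hweak : ∀ v : H, Tendsto (fun n => ⟪x n, v⟫) (Uf : Filter ℕ) (𝓝 ⟪u, v⟫) := by
    intro v; rw [huv v]; exact hΦ v
  obtain ⟨w, hw⟩ : ∃ w : H, w = u - W u := ⟨_, rfl⟩
  have hkey : ∀ n, 2*⟪x n - u, w⟫ + ‖w‖*‖w‖
      ≤ ‖x n - W (x n)‖*‖x n - W (x n)‖ + 2*‖x n - W (x n)‖*(C + ‖u‖) := by
    intro n
    have e1 : ‖x n - W u‖^2 = ‖x n - u‖^2 + 2*⟪x n - u, w⟫ + ‖w‖^2 := by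
      rw [show (x n - W u : H) = (x n - u) + w by rw [hw]; abel, norm_add_sq_real]
    have e2 : ‖x n - W u‖ ≤ ‖x n - W (x n)‖ + ‖x n - u‖ := by
      calc ‖x n - W u‖ = ‖(x n - W (x n)) + (W (x n) - W u)‖ := by rw [show (x n - W u : H) = (x n - W (x n)) + (W (x n) - W u) by abel]
        _ ≤ ‖x n - W (x n)‖ + ‖W (x n) - W u‖ := norm_add_le _ _
        _ ≤ ‖x n - W (x n)‖ + ‖x n - u‖ := by linarith [hW (x n) u]
    have e3 : ‖x n - u‖ ≤ C + ‖u‖ := by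
      calc ‖x n - u‖ ≤ ‖x n‖ + ‖u‖ := norm_sub_le _ _
        _ ≤ C + ‖u‖ := by linarith [hC n]
    nlinarith [norm_nonneg (x n - W (x n)), norm_nonneg (x n - u), norm_nonneg (x n - W u)]
  have h1 : Tendsto (fun n => (⟪x n - u, w⟫ : ℝ)) (Uf : Filter ℕ) (𝓝 0) := by
    have h := (hweak w).sub_const (⟪u, w⟫ : ℝ)
    simp only [sub_self] at h
    apply h.congr
    intro n
    rw [inner_sub_left]
  have h2 : Tendsto (fun n => ‖x n - W (x n)‖) (Uf : Filter ℕ) (𝓝 0) := hx.mono_left hU_atTop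
  have hW0 : ‖w‖*‖w‖ ≤ 0 := by
    have hlhs : Tendsto (fun n => 2*(⟪x n - u, w⟫:ℝ) + ‖w‖*‖w‖) (Uf : Filter ℕ) (𝓝 (2*0 + ‖w‖*‖w‖)) :=
      (h1.const_mul 2).add_const _
    have hrhs : Tendsto (fun n => ‖x n - W (x n)‖*‖x n - W (x n)‖ + 2*‖x n - W (x n)‖*(C + ‖u‖))
        (Uf : Filter ℕ) (𝓝 (0*0 + 2*0*(C + ‖u‖))) :=
      ((h2.mul h2)).add (((h2.const_mul 2)).mul_const _)
    have := le_of_tendsto_of_tendsto' hlhs hrhs hkey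
    simpa using this
  have hWu : W u = u := by
    have hnw : ‖w‖ = 0 := by nlinarith [norm_nonneg w]
    have := norm_eq_zero.mp hnw
    rw [hw, sub_eq_zero] at this
    exact this.symm
  have hlim2 : Tendsto (fun n => (⟪g, x n - z⟫ : ℝ)) (Uf : Filter ℕ) (𝓝 (⟪g, u - z⟫ : ℝ)) := by
    have h := (hweak g).sub_const (⟪g, z⟫ : ℝ)
    have heq : ∀ n, (⟪x n, g⟫ : ℝ) - ⟪g, z⟫ = ⟪g, x n - z⟫ := by
      intro n; rw [inner_sub_right, real_inner_comm]
    have heq2 : (⟪u, g⟫ : ℝ) - ⟪g, z⟫ = ⟪g, u - z⟫ := by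
      rw [inner_sub_right, real_inner_comm]
    rw [heq2] at h
    exact h.congr heq
  have hεle : ε ≤ ⟪g, u - z⟫ := ge_of_tendsto hlim2 hU_S
  have := hfix u hWu
  linarith

lemma vi_unique {A : H → H} {κ : ℝ} (hκ : 0 < κ)
    (hmono : ∀ x y : H, κ * ‖x - y‖ ^ 2 ≤ ⟪x - y, A x - A y⟫)
    {F : Set H} {z z' : H} (hzF : z ∈ F) (hzVI : ∀ w ∈ F, 0 ≤ ⟪w - z, A z⟫)
    (hz'F : z' ∈ F) (hz'VI : ∀ w ∈ F, 0 ≤ ⟪w - z', A z'⟫) : z' = z := by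
  have h1 := hz'VI z hzF
  have h2 := hzVI z' hz'F
  have h3 := hmono z' z
  have h4 : (⟪z' - z, A z' - A z⟫ : ℝ) = ⟪z - z', A z'⟫ * (-1) - ⟪z' - z, A z⟫ := by
    rw [inner_sub_right, show (z - z' : H) = -(z' - z) by abel, inner_neg_left]; ring
  have h5 : ‖z' - z‖^2 ≤ 0 := by nlinarith
  have h6 : ‖z' - z‖ = 0 := by nlinarith [norm_nonneg (z' - z)]
  rw [← sub_eq_zero]; exact norm_eq_zero.mp h6

lemma combo_est {L X Y sn dn g bb : ℝ} (hg0 : 0 < g) (hgb : g ≤ bb) (hb1 : bb < 1) (hbb0 : 0 < bb)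
    (hid : L = g*X^2 + (1-g)*sn - g*(1-g)*Y^2) (hX : X^2 ≤ sn) (hdn : dn = g*Y) :
    L ≤ sn - ((1-bb)/bb)*dn^2 := by
  have key : ((1-bb)/bb)*dn^2 ≤ g*(1-g)*Y^2 := by
    rw [hdn, div_mul_eq_mul_div, div_le_iff₀ hbb0]
    nlinarith [sq_nonneg Y, mul_pos hg0 hg0]
  nlinarith [mul_le_mul_of_nonneg_left hX hg0.le]

lemma step_est {v w : H} {lv R C2 : ℝ} (hl0 : 0 ≤ lv) (hl1 : lv ≤ 1)
    (hv : ‖v‖ ≤ R) (hw : ‖w‖ ≤ C2) : ‖v - lv • w‖^2 ≤ ‖v‖^2 + lv * (2*C2*R + C2^2) := by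
  have hC20 : 0 ≤ C2 := le_trans (norm_nonneg w) hw
  have hR0 : 0 ≤ R := le_trans (norm_nonneg v) hv
  rw [norm_sub_sq_real, real_inner_smul_right, norm_smul, Real.norm_eq_abs, abs_of_nonneg hl0]
  have hip : |(⟪v, w⟫ : ℝ)| ≤ R * C2 := by
    calc |(⟪v, w⟫ : ℝ)| ≤ ‖v‖ * ‖w‖ := abs_real_inner_le_norm _ _
      _ ≤ R * C2 := mul_le_mul hv hw (norm_nonneg _) hR0
  have hw2 : ‖w‖^2 ≤ C2^2 := pow_le_pow_left₀ (norm_nonneg _) hw 2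
  have h1 : -(⟪v, w⟫ : ℝ) ≤ R * C2 := by
    have := neg_abs_le (⟪v, w⟫ : ℝ); linarith
  have h2 : (lv * ‖w‖)^2 ≤ lv * C2^2 := by
    have h3 : lv^2 ≤ lv := by nlinarith
    have h4 : (lv * ‖w‖)^2 = lv^2 * ‖w‖^2 := by ring
    nlinarith [sq_nonneg ‖w‖, norm_nonneg w]
  nlinarith [mul_le_mul_of_nonneg_left h1 hl0]

lemma div_cancel_aux {bb : ℝ} (h0 : 0 < bb) (h1 : bb < 1) (X : ℝ) :
    (bb/(1-bb)) * (((1-bb)/bb) * X) = X := by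
  have h2 : bb ≠ 0 := ne_of_gt h0
  have h3 : (1:ℝ) - bb ≠ 0 := by intro h; rw [sub_eq_zero] at h; exact absurd h.symm (ne_of_lt h1)
  field_simp

end aux

set_option maxHeartbeats 4000000

/-- (Iemoto–Takahashi) Convergence of the hybrid steepest descent method
`y_{n+1} = (I - λ_n A) U_{n,1} y_n` built from the W-mappings
`U_{n,k} = γ_k T_k U_{n,k+1} + (1 - γ_k) I` (here indexed from `0`): the sequence
`{y_n}` converges strongly to the unique solution of the variational inequality
over the common fixed point set `F` of `{T_n}`. -/
theorem iemoto_takahashi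
    {H : Type*} [NormedAddCommGroup H] [InnerProductSpace ℝ H] [CompleteSpace H]
    (T : ℕ → H → H) (hT : ∀ n, ∀ x y : H, ‖T n x - T n y‖ ≤ ‖x - y‖)
    (F : Set H) (hF : F = {z : H | ∀ n, T n z = z})
    (hFne : F.Nonempty)
    (A : H → H) (κ η : ℝ) (hκ : 0 < κ) (hη : 0 < η) (hκη : η ^ 2 < 2 * κ)
    (hmono : ∀ x y : H, κ * ‖x - y‖ ^ 2 ≤ ⟪x - y, A x - A y⟫)
    (hlip : ∀ x y : H, ‖A x - A y‖ ≤ η * ‖x - y‖)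
    (l : ℕ → ℝ) (hl : ∀ n, l n ∈ Set.Icc (0 : ℝ) 1)
    (hl0 : Tendsto l atTop (𝓝 0))
    (hldiv : Tendsto (fun N => ∑ n ∈ Finset.range N, l n) atTop atTop)
    (a b : ℝ) (ha : 0 < a) (hab : a ≤ b) (hb : b < 1)
    (γ : ℕ → ℝ) (hγ : ∀ n, γ n ∈ Set.Icc a b)
    (U : ℕ → ℕ → H → H)
    (hU1 : ∀ n, U n (n + 1) = id)
    (hU2 : ∀ n k, k ≤ n → ∀ x : H, U n k x = γ k • T k (U n (k + 1) x) + (1 - γ k) • x)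
    (y : ℕ → H)
    (hy : ∀ n, y (n + 1) = U n 0 (y n) - l n • A (U n 0 (y n))) :
    ∃ z : H, (z ∈ F ∧ ∀ w ∈ F, 0 ≤ ⟪w - z, A z⟫) ∧
      (∀ z' : H, z' ∈ F → (∀ w ∈ F, 0 ≤ ⟪w - z', A z'⟫) → z' = z) ∧
      Tendsto y atTop (𝓝 z) := by
  classical
  rcases subsingleton_or_nontrivial H with hsub | hnt
  · obtain ⟨z, hzF⟩ := hFne
    refine ⟨z, ⟨hzF, fun w _ => ?_⟩, fun z' _ _ => Subsingleton.elim _ _, ?_⟩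
    · rw [show (w - z : H) = 0 from Subsingleton.elim _ _, inner_zero_left]
    · have : y = fun _ => z := funext fun n => Subsingleton.elim _ _
      rw [this]; exact tendsto_const_nhds
  -- basic facts
  obtain ⟨x₀, hx₀⟩ := exists_ne (0 : H)
  have hκη2 : κ ≤ η := by
    have h1 := hmono x₀ 0
    have h2 := hlip x₀ 0
    have h3 : (⟪x₀ - 0, A x₀ - A 0⟫ : ℝ) ≤ ‖x₀ - 0‖ * ‖A x₀ - A 0‖ := real_inner_le_norm _ _
    have h4 : 0 < ‖x₀ - 0‖ := by rw [sub_zero]; exact norm_pos_iff.mpr hx₀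
    have h5 := mul_le_mul_of_nonneg_left h2 h4.le
    nlinarith [norm_nonneg (A x₀ - A 0), mul_pos h4 h4]
  obtain ⟨τ, hτdef⟩ : ∃ t : ℝ, t = 2*κ - η^2 := ⟨_, rfl⟩
  have hτ0 : 0 < τ := by rw [hτdef]; nlinarith
  have hτ1 : τ ≤ 1 := by rw [hτdef]; nlinarith [sq_nonneg (1 - η)]
  have hb0 : 0 < b := lt_of_lt_of_le ha hab
  have hTz : ∀ w ∈ F, ∀ n, T n w = w := by
    intro w hw; rw [hF] at hw; exact hw
  obtain ⟨z₀, hz₀⟩ := hFne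
  have hγpos : ∀ k, 0 < γ k := fun k => lt_of_lt_of_le ha (hγ k).1
  have hγlt : ∀ k, γ k < 1 := fun k => lt_of_le_of_lt (hγ k).2 hb
  -- nonexpansiveness of U n k
  have hUne : ∀ n d k, k + d = n + 1 → ∀ x w : H, ‖U n k x - U n k w‖ ≤ ‖x - w‖ := by
    intro n d
    induction d with
    | zero =>
      intro k hk x w
      have : k = n + 1 := by omega
      subst this
      rw [hU1]; simp
    | succ d ih =>
      intro k hk x w
      have hkn : k ≤ n := by omega
      rw [hU2 n k hkn x, hU2 n k hkn w]
      have hsplit : (γ k • T k (U n (k+1) x) + (1 - γ k) • x)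
          - (γ k • T k (U n (k+1) w) + (1 - γ k) • w)
          = γ k • (T k (U n (k+1) x) - T k (U n (k+1) w)) + (1 - γ k) • (x - w) := by
        rw [smul_sub, smul_sub]; abel
      rw [hsplit]
      have h1 : ‖γ k • (T k (U n (k+1) x) - T k (U n (k+1) w))‖
          = γ k * ‖T k (U n (k+1) x) - T k (U n (k+1) w)‖ := by
        rw [norm_smul, Real.norm_eq_abs, abs_of_pos (hγpos k)]
      have h2 : ‖(1 - γ k) • (x - w)‖ = (1 - γ k) * ‖x - w‖ := by
        rw [norm_smul, Real.norm_eq_abs, abs_of_nonneg (by linarith [hγlt k])]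
      calc ‖γ k • (T k (U n (k+1) x) - T k (U n (k+1) w)) + (1 - γ k) • (x - w)‖
          ≤ ‖γ k • (T k (U n (k+1) x) - T k (U n (k+1) w))‖ + ‖(1 - γ k) • (x - w)‖ :=
            norm_add_le _ _
        _ = γ k * ‖T k (U n (k+1) x) - T k (U n (k+1) w)‖ + (1 - γ k) * ‖x - w‖ := by
            rw [h1, h2]
        _ ≤ γ k * ‖x - w‖ + (1 - γ k) * ‖x - w‖ := by
            have h3 : ‖T k (U n (k+1) x) - T k (U n (k+1) w)‖ ≤ ‖x - w‖ :=
              le_trans (hT k _ _) (ih (k+1) (by omega) x w)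
            have := mul_le_mul_of_nonneg_left h3 (le_of_lt (hγpos k))
            linarith
        _ = ‖x - w‖ := by ring
  have hUne' : ∀ n k, k ≤ n + 1 → ∀ x w : H, ‖U n k x - U n k w‖ ≤ ‖x - w‖ :=
    fun n k hk => hUne n (n+1-k) k (by omega)
  -- fixed points of U n k
  have hUfix : ∀ n d k, k + d = n + 1 → ∀ w, w ∈ F → U n k w = w := by
    intro n d
    induction d with
    | zero =>
      intro k hk w hw
      have : k = n + 1 := by omega
      subst this; rw [hU1]; simp
    | succ d ih =>
      intro k hk w hw
      have hkn : k ≤ n := by omega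
      rw [hU2 n k hkn w, ih (k+1) (by omega) w hw, hTz w hw k]
      module
  have hUfix' : ∀ n k, k ≤ n + 1 → ∀ w, w ∈ F → U n k w = w :=
    fun n k hk => hUfix n (n+1-k) k (by omega)
  -- geometric estimate
  have hUdiff : ∀ d n k, k + d = n + 1 → ∀ x : H,
      ‖U (n+1) k x - U n k x‖ ≤ b^d * (2*‖x - z₀‖) := by
    intro d
    induction d with
    | zero =>
      intro n k hk x
      have : k = n + 1 := by omega
      subst this
      have e1 : U (n+1) (n+1) x = γ (n+1) • T (n+1) x + (1 - γ (n+1)) • x :=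
        by rw [hU2 (n+1) (n+1) (le_refl _) x, hU1]; simp
      rw [e1, hU1]
      have e2 : γ (n+1) • T (n+1) x + (1 - γ (n+1)) • x - id x = γ (n+1) • (T (n+1) x - x) := by
        simp only [id_eq]; rw [smul_sub]; module
      rw [e2, norm_smul, Real.norm_eq_abs, abs_of_pos (hγpos _)]
      have h3 : ‖T (n+1) x - x‖ ≤ 2*‖x - z₀‖ := by
        calc ‖T (n+1) x - x‖ = ‖(T (n+1) x - T (n+1) z₀) + (z₀ - x)‖ := by
              rw [hTz z₀ hz₀ (n+1)]; congr 1; abel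
          _ ≤ ‖T (n+1) x - T (n+1) z₀‖ + ‖z₀ - x‖ := norm_add_le _ _
          _ ≤ ‖x - z₀‖ + ‖z₀ - x‖ := by linarith [hT (n+1) x z₀]
          _ = 2*‖x - z₀‖ := by rw [norm_sub_rev z₀ x]; ring
      have h4 : γ (n+1) ≤ 1 := le_of_lt (hγlt _)
      have h5 : 0 ≤ ‖T (n+1) x - x‖ := norm_nonneg _
      simp only [pow_zero, one_mul]
      nlinarith [hγpos (n+1)]
    | succ d ih =>
      intro n k hk x
      have hkn : k ≤ n := by omega
      have hkn1 : k ≤ n + 1 := by omega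
      have e1 : U (n+1) k x - U n k x
          = γ k • (T k (U (n+1) (k+1) x) - T k (U n (k+1) x)) := by
        rw [hU2 (n+1) k hkn1 x, hU2 n k hkn x, smul_sub]; abel
      rw [e1, norm_smul, Real.norm_eq_abs, abs_of_pos (hγpos k)]
      have h2 : ‖T k (U (n+1) (k+1) x) - T k (U n (k+1) x)‖ ≤ b^d * (2*‖x - z₀‖) :=
        le_trans (hT k _ _) (ih n (k+1) (by omega) x)
      calc γ k * ‖T k (U (n+1) (k+1) x) - T k (U n (k+1) x)‖
          ≤ b * (b^d * (2*‖x - z₀‖)) := by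
            apply mul_le_mul (hγ k).2 h2 (norm_nonneg _) (le_of_lt hb0)
        _ = b^(d+1) * (2*‖x - z₀‖) := by ring
  -- limits V
  have hVex : ∀ k (x : H), ∃ v, Tendsto (fun n => U n k x) atTop (𝓝 v) := by
    intro k x
    have hca : CauchySeq (fun m => U (m + k) k x) := by
      apply cauchySeq_of_le_geometric b (b * (2*‖x - z₀‖)) hb
      intro m
      rw [dist_eq_norm, norm_sub_rev]
      have := hUdiff (m+1) (m+k) k (by omega) x
      calc ‖U (m+1+k) k x - U (m+k) k x‖
          = ‖U ((m+k)+1) k x - U (m+k) k x‖ := by rw [show m+1+k = m+k+1 from by omega]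
        _ ≤ b^(m+1) * (2*‖x - z₀‖) := this
        _ = b * (2*‖x - z₀‖) * b^m := by ring
    obtain ⟨v, hv⟩ := cauchySeq_tendsto_of_complete hca
    exact ⟨v, (tendsto_add_atTop_iff_nat k).mp hv⟩
  choose V hV using hVex
  -- rate at k = 0
  have hrate : ∀ (x : H) (n : ℕ), ‖U n 0 x - V 0 x‖ ≤ b * (2*‖x - z₀‖) * b^n / (1-b) := by
    intro x n
    have hd : ∀ m, dist (U m 0 x) (U (m+1) 0 x) ≤ b * (2*‖x - z₀‖) * b^m := by
      intro m
      rw [dist_eq_norm, norm_sub_rev]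
      have := hUdiff (m+1) m 0 (by omega) x
      calc ‖U (m+1) 0 x - U m 0 x‖ ≤ b^(m+1) * (2*‖x - z₀‖) := this
        _ = b * (2*‖x - z₀‖) * b^m := by ring
    have := dist_le_of_le_geometric_of_tendsto b _ hb hd (hV 0 x) n
    rwa [dist_eq_norm] at this
  -- V properties
  have hVne : ∀ k (x w : H), ‖V k x - V k w‖ ≤ ‖x - w‖ := by
    intro k x w
    apply le_of_tendsto ((hV k x).sub (hV k w)).norm
    filter_upwards [eventually_ge_atTop k] with n hn
    exact hUne' n k (by omega) x w
  have hVfixF : ∀ w, w ∈ F → ∀ k, V k w = w := by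
    intro w hw k
    refine tendsto_nhds_unique (hV k w) ?_
    have heq : (fun n => U n k w) =ᶠ[atTop] (fun _ => w) := by
      filter_upwards [eventually_ge_atTop k] with n hn using hUfix' n k (by omega) w hw
    exact Tendsto.congr' heq.symm tendsto_const_nhds
  have hTcont : ∀ k, Continuous (T k) := by
    intro k
    apply (LipschitzWith.of_dist_le_mul (K := 1) ?_).continuous
    intro x w
    rw [dist_eq_norm, dist_eq_norm]
    simpa using hT k x w
  have hVrec : ∀ k (x : H), V k x = γ k • T k (V (k+1) x) + (1 - γ k) • x := by
    intro k x
    have h1 : Tendsto (fun n => γ k • T k (U n (k+1) x) + (1 - γ k) • x) atTop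
        (𝓝 (γ k • T k (V (k+1) x) + (1 - γ k) • x)) := by
      apply Tendsto.add _ tendsto_const_nhds
      exact (((hTcont k).tendsto _).comp (hV (k+1) x)).const_smul _
    have h2 : (fun n => U n k x) =ᶠ[atTop] (fun n => γ k • T k (U n (k+1) x) + (1 - γ k) • x) := by
      filter_upwards [eventually_ge_atTop k] with n hn using hU2 n k hn x
    exact tendsto_nhds_unique (hV k x) (h1.congr' h2.symm)
  -- Fix(V 0) ⊆ F
  have hQstep : ∀ (u : H), ∀ k, ‖V k u - z₀‖ = ‖u - z₀‖ →
      (V k u = u ∧ T k (V (k+1) u) = u ∧ ‖V (k+1) u - z₀‖ = ‖u - z₀‖) := by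
    intro u k hQ
    have hVk1 : ‖V (k+1) u - z₀‖ ≤ ‖u - z₀‖ := by
      calc ‖V (k+1) u - z₀‖ = ‖V (k+1) u - V (k+1) z₀‖ := by rw [hVfixF z₀ hz₀ (k+1)]
        _ ≤ ‖u - z₀‖ := hVne (k+1) u z₀
    have hTle : ‖T k (V (k+1) u) - z₀‖ ≤ ‖u - z₀‖ := by
      calc ‖T k (V (k+1) u) - z₀‖ = ‖T k (V (k+1) u) - T k z₀‖ := by rw [hTz z₀ hz₀ k]
        _ ≤ ‖V (k+1) u - z₀‖ := hT k _ _
        _ ≤ ‖u - z₀‖ := hVk1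
    have hcombo : V k u - z₀ = γ k • (T k (V (k+1) u) - z₀) + (1 - γ k) • (u - z₀) := by
      rw [hVrec k u, smul_sub, smul_sub]; module
    have hid := norm_combo_sq (γ k) (T k (V (k+1) u) - z₀) (u - z₀)
    rw [← hcombo, show (T k (V (k+1) u) - z₀) - (u - z₀) = T k (V (k+1) u) - u by abel] at hid
    have hTu : T k (V (k+1) u) = u := by
      rw [hQ] at hid
      have h6 : ‖T k (V (k+1) u) - z₀‖^2 ≤ ‖u - z₀‖^2 := by
        nlinarith [norm_nonneg (T k (V (k+1) u) - z₀), norm_nonneg (u - z₀)]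
      have h0 : ‖T k (V (k+1) u) - u‖^2 ≤ 0 := by
        nlinarith [hγpos k, hγlt k, mul_pos (hγpos k) (sub_pos.mpr (hγlt k))]
      have h1 : ‖T k (V (k+1) u) - u‖ = 0 := by nlinarith [norm_nonneg (T k (V (k+1) u) - u)]
      rw [← sub_eq_zero]; exact norm_eq_zero.mp h1
    have hVk : V k u = u := by rw [hVrec k u, hTu]; module
    refine ⟨hVk, hTu, le_antisymm hVk1 ?_⟩
    calc ‖u - z₀‖ = ‖T k (V (k+1) u) - T k z₀‖ := by rw [hTu, hTz z₀ hz₀ k]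
      _ ≤ ‖V (k+1) u - z₀‖ := hT k _ _
  have hVfix0 : ∀ u : H, V 0 u = u → u ∈ F := by
    intro u hu
    have hQ : ∀ k, ‖V k u - z₀‖ = ‖u - z₀‖ := by
      intro k
      induction k with
      | zero => rw [hu]
      | succ k ih => exact (hQstep u k ih).2.2
    rw [hF]
    intro k
    have h1 := (hQstep u k (hQ k)).2.1
    have h2 := (hQstep u (k+1) (hQ (k+1))).1
    rw [h2] at h1
    exact h1
  -- F is closed and convex
  have hFeq : F = ⋂ n, {w : H | T n w = w} := by
    rw [hF]; ext w; simp [Set.mem_iInter]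
  have hFclosed : IsClosed F := by
    rw [hFeq]
    exact isClosed_iInter (fun n => isClosed_eq (hTcont n) continuous_id)
  have hFconv : Convex ℝ F := by
    rw [hFeq]
    exact convex_iInter (fun n => fixed_convex (hT n))
  -- the VI solution z
  obtain ⟨z, hzF, hzVI⟩ := vi_exists ⟨z₀, hz₀⟩ hFclosed hFconv hκ hη hκη hmono hlip
  refine ⟨z, ⟨hzF, hzVI⟩, ?_, ?_⟩
  · exact fun z' hz'F hz'VI => vi_unique hκ hmono hzF hzVI hz'F hz'VI
  -- convergence machinery
  have hWnz : ∀ n, U n 0 z = z := fun n => hUfix' n 0 (by omega) z hzF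
  have hWne : ∀ n (x w : H), ‖U n 0 x - U n 0 w‖ ≤ ‖x - w‖ := fun n => hUne' n 0 (by omega)
  have hfac : ∀ n, 0 ≤ 1 - l n * τ := by
    intro n
    nlinarith [(hl n).1, (hl n).2]
  obtain ⟨R, hRdef⟩ : ∃ r : ℝ, r = max ‖y 0 - z‖ (2*‖A z‖/τ) := ⟨_, rfl⟩
  have hR0 : 0 ≤ R := by rw [hRdef]; exact le_trans (norm_nonneg _) (le_max_left _ _)
  have hAzR : 2*‖A z‖ ≤ τ * R := by
    have h := le_max_right ‖y 0 - z‖ (2*‖A z‖/τ)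
    rw [← hRdef, div_le_iff₀ hτ0] at h
    linarith
  have hbound : ∀ n, ‖y n - z‖ ≤ R := by
    intro n
    induction n with
    | zero => rw [hRdef]; exact le_max_left _ _
    | succ n ih =>
      have hcn := contraction_norm (le_of_lt hη) hmono hlip (hl n).1 (hl n).2 (U n 0 (y n)) z
      rw [← hτdef] at hcn
      have hWz : ‖U n 0 (y n) - z‖ ≤ R := by
        calc ‖U n 0 (y n) - z‖ = ‖U n 0 (y n) - U n 0 z‖ := by rw [hWnz n]
          _ ≤ ‖y n - z‖ := hWne n _ _
          _ ≤ R := ih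
      have hsplit : y (n+1) - z
          = ((U n 0 (y n) - l n • A (U n 0 (y n))) - (z - l n • A z)) - l n • A z := by
        rw [hy n]; abel
      have hAz : ‖l n • A z‖ = l n * ‖A z‖ := by
        rw [norm_smul, Real.norm_eq_abs, abs_of_nonneg (hl n).1]
      have hfn : 0 ≤ 1 - l n * τ/2 := by nlinarith [hfac n, (hl n).1, hτ0.le]
      have hWyz : ‖U n 0 (y n) - z‖ ≤ ‖y n - z‖ := by
        calc ‖U n 0 (y n) - z‖ = ‖U n 0 (y n) - U n 0 z‖ := by rw [hWnz n]
          _ ≤ ‖y n - z‖ := hWne n _ _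
      calc ‖y (n+1) - z‖
          = ‖((U n 0 (y n) - l n • A (U n 0 (y n))) - (z - l n • A z)) - l n • A z‖ := by
            rw [hsplit]
        _ ≤ ‖(U n 0 (y n) - l n • A (U n 0 (y n))) - (z - l n • A z)‖ + ‖l n • A z‖ :=
            norm_sub_le _ _
        _ ≤ (1 - l n * τ/2) * ‖U n 0 (y n) - z‖ + l n * ‖A z‖ := by
            rw [hAz]; exact add_le_add_left hcn _
        _ ≤ (1 - l n * τ/2) * R + l n * ‖A z‖ := by
            have := mul_le_mul_of_nonneg_left hWz hfn; linarith
        _ ≤ R := by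
            have h2 : l n * (2*‖A z‖) ≤ l n * (τ * R) := mul_le_mul_of_nonneg_left hAzR (hl n).1
            nlinarith
  obtain ⟨s, hsdef⟩ : ∃ s : ℕ → ℝ, s = fun n => ‖y n - z‖^2 := ⟨_, rfl⟩
  obtain ⟨d, hddef⟩ : ∃ d : ℕ → ℝ, d = fun n => ‖U n 0 (y n) - y n‖ := ⟨_, rfl⟩
  have hs0 : ∀ n, 0 ≤ s n := fun n => by simp only [hsdef]; exact sq_nonneg _
  have hd0 : ∀ n, 0 ≤ d n := fun n => by simp only [hddef]; exact norm_nonneg _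
  obtain ⟨C₂, hC2⟩ : ∃ c : ℝ, c = ‖A z‖ + η * R := ⟨_, rfl⟩
  have hC₂0 : 0 ≤ C₂ := by rw [hC2]; exact add_nonneg (norm_nonneg _) (mul_nonneg hη.le hR0)
  have hWyzR : ∀ n, ‖U n 0 (y n) - z‖ ≤ R := by
    intro n
    calc ‖U n 0 (y n) - z‖ = ‖U n 0 (y n) - U n 0 z‖ := by rw [hWnz n]
      _ ≤ ‖y n - z‖ := hWne n _ _
      _ ≤ R := hbound n
  have hAW : ∀ n, ‖A (U n 0 (y n))‖ ≤ C₂ := by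
    intro n
    calc ‖A (U n 0 (y n))‖ = ‖(A (U n 0 (y n)) - A z) + A z‖ := by rw [sub_add_cancel]
      _ ≤ ‖A (U n 0 (y n)) - A z‖ + ‖A z‖ := norm_add_le _ _
      _ ≤ η * ‖U n 0 (y n) - z‖ + ‖A z‖ := by linarith [hlip (U n 0 (y n)) z]
      _ ≤ C₂ := by
          have := mul_le_mul_of_nonneg_left (hWyzR n) hη.le
          rw [hC2]; linarith
  obtain ⟨C₁, hC1⟩ : ∃ c : ℝ, c = 2*C₂*R + C₂^2 := ⟨_, rfl⟩
  -- recursion A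
  have hrecA : ∀ n, s (n+1) ≤ (1 - l n * τ) * s n + 2 * l n * ⟪-(A z), y (n+1) - z⟫ := by
    intro n
    have hsplit : y (n+1) - z
        = ((U n 0 (y n) - l n • A (U n 0 (y n))) - (z - l n • A z)) + l n • (-(A z)) := by
      rw [hy n, smul_neg]; abel
    have e1 : s (n+1) = ‖(U n 0 (y n) - l n • A (U n 0 (y n))) - (z - l n • A z)‖^2
        + 2*⟪(U n 0 (y n) - l n • A (U n 0 (y n))) - (z - l n • A z), l n • (-(A z))⟫
        + ‖l n • (-(A z))‖^2 := by
      simp only [hsdef]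
      rw [hsplit, norm_add_sq_real]
    have e2 : (⟪l n • (-(A z)), y (n+1) - z⟫ : ℝ)
        = ⟪(U n 0 (y n) - l n • A (U n 0 (y n))) - (z - l n • A z), l n • (-(A z))⟫
          + ‖l n • (-(A z))‖^2 := by
      rw [hsplit, inner_add_right, real_inner_self_eq_norm_sq,
        real_inner_comm (l n • (-(A z)))]
    have e2' : (⟪l n • (-(A z)), y (n+1) - z⟫ : ℝ) = l n * ⟪-(A z), y (n+1) - z⟫ :=
      real_inner_smul_left _ _ _
    have e3 : ‖(U n 0 (y n) - l n • A (U n 0 (y n))) - (z - l n • A z)‖^2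
        ≤ (1 - l n * τ) * s n := by
      have h := contraction_sq (le_of_lt hη) hmono hlip (hl n).1 (hl n).2 (U n 0 (y n)) z
      rw [← hτdef] at h
      have h2 : ‖U n 0 (y n) - z‖^2 ≤ ‖y n - z‖^2 :=
        pow_le_pow_left₀ (norm_nonneg _) (by
          calc ‖U n 0 (y n) - z‖ = ‖U n 0 (y n) - U n 0 z‖ := by rw [hWnz n]
            _ ≤ ‖y n - z‖ := hWne n _ _) 2
      calc ‖(U n 0 (y n) - l n • A (U n 0 (y n))) - (z - l n • A z)‖^2
          ≤ (1 - l n * τ) * ‖U n 0 (y n) - z‖^2 := h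
        _ ≤ (1 - l n * τ) * ‖y n - z‖^2 := mul_le_mul_of_nonneg_left h2 (hfac n)
        _ = (1 - l n * τ) * s n := by simp only [hsdef]
    have e4 : (0:ℝ) ≤ ‖l n • (-(A z))‖^2 := sq_nonneg _
    linarith [e1, e2, e2', e3, e4]
  -- recursion B
  have hrecB : ∀ n, s (n+1) ≤ s n - ((1-b)/b) * (d n)^2 + l n * C₁ := by
    intro n
    have hU0 : U n 0 (y n) = γ 0 • T 0 (U n 1 (y n)) + (1 - γ 0) • y n :=
      hU2 n 0 (Nat.zero_le n) (y n)
    have hcombo : U n 0 (y n) - z = γ 0 • (T 0 (U n 1 (y n)) - z) + (1 - γ 0) • (y n - z) := by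
      rw [hU0, smul_sub, smul_sub]; module
    have hid := norm_combo_sq (γ 0) (T 0 (U n 1 (y n)) - z) (y n - z)
    rw [← hcombo,
      show (T 0 (U n 1 (y n)) - z) - (y n - z) = T 0 (U n 1 (y n)) - y n from by abel] at hid
    have hdn : d n = γ 0 * ‖T 0 (U n 1 (y n)) - y n‖ := by
      simp only [hddef]
      rw [show U n 0 (y n) - y n = γ 0 • (T 0 (U n 1 (y n)) - y n) from by
        rw [hU0, smul_sub]; module, norm_smul, Real.norm_eq_abs, abs_of_pos (hγpos 0)]
    have hT0 : ‖T 0 (U n 1 (y n)) - z‖ ≤ ‖y n - z‖ := by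
      calc ‖T 0 (U n 1 (y n)) - z‖ = ‖T 0 (U n 1 (y n)) - T 0 z‖ := by rw [hTz z hzF 0]
        _ ≤ ‖U n 1 (y n) - z‖ := hT 0 _ _
        _ = ‖U n 1 (y n) - U n 1 z‖ := by rw [hUfix' n 1 (by omega) z hzF]
        _ ≤ ‖y n - z‖ := hUne' n 1 (by omega) _ _
    have hsn : s n = ‖y n - z‖^2 := by simp only [hsdef]
    rw [← hsn] at hid
    have hX : ‖T 0 (U n 1 (y n)) - z‖ ^ 2 ≤ s n := by
      rw [hsn]; exact pow_le_pow_left₀ (norm_nonneg _) hT0 2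
    have hstep1 : ‖U n 0 (y n) - z‖^2 ≤ s n - ((1-b)/b) * (d n)^2 :=
      combo_est (hγpos 0) (hγ 0).2 hb hb0 hid hX hdn
    have hexp : s (n+1) ≤ ‖U n 0 (y n) - z‖^2 + l n * C₁ := by
      have h := step_est (hl n).1 (hl n).2 (hWyzR n) (hAW n)
      have he : y (n+1) - z = (U n 0 (y n) - z) - l n • A (U n 0 (y n)) := by
        rw [hy n]; abel
      calc s (n+1) = ‖(U n 0 (y n) - z) - l n • A (U n 0 (y n))‖^2 := by
            simp only [hsdef]; rw [he]
        _ ≤ ‖U n 0 (y n) - z‖^2 + l n * (2*C₂*R + C₂^2) := h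
        _ = ‖U n 0 (y n) - z‖^2 + l n * C₁ := by rw [hC1]
      
    linarith
  -- further bounds
  have hyb : ∀ n, ‖y n‖ ≤ R + ‖z‖ := by
    intro n
    calc ‖y n‖ = ‖(y n - z) + z‖ := by rw [sub_add_cancel]
      _ ≤ ‖y n - z‖ + ‖z‖ := norm_add_le _ _
      _ ≤ R + ‖z‖ := by linarith [hbound n]
  obtain ⟨K, hK⟩ : ∃ k : ℝ, k = b * (2*(R + ‖z‖ + ‖z₀‖)) / (1-b) := ⟨_, rfl⟩
  have hWV : ∀ n, ‖U n 0 (y n) - V 0 (y n)‖ ≤ K * b^n := by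
    intro n
    have h2 : ‖y n - z₀‖ ≤ R + ‖z‖ + ‖z₀‖ := by
      calc ‖y n - z₀‖ ≤ ‖y n‖ + ‖z₀‖ := norm_sub_le _ _
        _ ≤ _ := by linarith [hyb n]
    calc ‖U n 0 (y n) - V 0 (y n)‖ ≤ b * (2*‖y n - z₀‖) * b^n / (1-b) := hrate (y n) n
      _ ≤ K * b^n := by
          rw [hK, div_mul_eq_mul_div]
          apply div_le_div_of_nonneg_right ?_ (by linarith)
          have hbn : (0:ℝ) ≤ b^n := pow_nonneg hb0.le n
          have h3 := mul_le_mul_of_nonneg_left h2 hb0.le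
          have h4 := mul_le_mul_of_nonneg_right h3 hbn
          linarith [h4]
  have hVne0 : ∀ u v : H, ‖V 0 u - V 0 v‖ ≤ ‖u - v‖ := hVne 0
  have hfixg : ∀ u : H, V 0 u = u → ⟪-(A z), u - z⟫ ≤ 0 := by
    intro u hu
    have h1 := hzVI u (hVfix0 u hu)
    rw [inner_neg_left, real_inner_comm]
    linarith
  have hbm : (0:ℝ) ≤ b := hb0.le
  have hbp : Tendsto (fun n : ℕ => b^n) atTop (𝓝 0) :=
    tendsto_pow_atTop_nhds_zero_of_lt_one hbm hb
  have hbb : (0:ℝ) < b/(1-b) := div_pos hb0 (by linarith)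
  -- main eventual smallness
  have hmain : ∀ ε : ℝ, 0 < ε → ∀ᶠ n in atTop, s n < ε := by
    intro ε hε
    by_cases hfin : {k | s k < s (k+1)}.Finite
    · -- eventually nonincreasing case
      obtain ⟨N₀, hN₀⟩ : ∃ N₀, ∀ k ∈ {k | s k < s (k+1)}, k ≤ N₀ := by
        rcases Set.Finite.bddAbove hfin with ⟨N₀, hN₀⟩
        exact ⟨N₀, fun k hk => hN₀ hk⟩
      have hdec : ∀ k, N₀ + 1 ≤ k → s (k+1) ≤ s k := by
        intro k hk
        by_contra hcon
        push_neg at hcon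
        have := hN₀ k hcon
        omega
      have hanti : Antitone (fun m => s (m + (N₀+1))) := by
        apply antitone_nat_of_succ_le
        intro m
        have := hdec (m + (N₀+1)) (by omega)
        calc s (m + 1 + (N₀+1)) = s ((m + (N₀+1)) + 1) := by ring_nf
          _ ≤ s (m + (N₀+1)) := this
      have hbdd : BddBelow (Set.range (fun m => s (m + (N₀+1)))) := by
        refine ⟨0, fun x hx => ?_⟩
        obtain ⟨m, hm⟩ := hx
        rw [← hm]; exact hs0 _
      have hL1 : Tendsto (fun m => s (m + (N₀+1))) atTop (𝓝 (⨅ m, s (m + (N₀+1)))) :=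
        tendsto_atTop_ciInf hanti hbdd
      have hL2 : Tendsto (fun m => s ((m + 1) + (N₀+1))) atTop (𝓝 (⨅ m, s (m + (N₀+1)))) := by
        have := (tendsto_add_atTop_iff_nat 1).mpr hL1
        exact this.congr (fun m => by ring_nf)
      have hdiffs : Tendsto (fun m => s (m + (N₀+1)) - s ((m + 1) + (N₀+1))) atTop (𝓝 0) := by
        simpa using hL1.sub hL2
      have hd2 : Tendsto (fun m => (d (m + (N₀+1)))^2) atTop (𝓝 0) := by
        apply squeeze_zero (fun m => sq_nonneg _)
          (g := fun m => (b/(1-b)) * ((s (m + (N₀+1)) - s ((m + 1) + (N₀+1))) + l (m + (N₀+1)) * C₁))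
        · intro m
          have hB := hrecB (m + (N₀+1))
          have heq : s ((m + 1) + (N₀+1)) = s ((m + (N₀+1)) + 1) := by ring_nf
          rw [heq]
          have h2 : ((1-b)/b) * (d (m + (N₀+1)))^2
              ≤ (s (m + (N₀+1)) - s ((m + (N₀+1)) + 1)) + l (m + (N₀+1)) * C₁ := by linarith
          have h3 := mul_le_mul_of_nonneg_left h2 hbb.le
          have h4 : (b/(1-b)) * (((1-b)/b) * (d (m + (N₀+1)))^2) = (d (m + (N₀+1)))^2 :=
            div_cancel_aux hb0 hb _
          linarith
        · have hls : Tendsto (fun m => l (m + (N₀+1))) atTop (𝓝 0) :=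
            (tendsto_add_atTop_iff_nat (N₀+1)).mpr hl0
          have := (hdiffs.add (hls.mul_const C₁)).const_mul (b/(1-b))
          simpa using this
      have hdtend : Tendsto d atTop (𝓝 0) := by
        have h1 : Tendsto (fun m => d (m + (N₀+1))) atTop (𝓝 0) :=
          tendsto_of_sq_tendsto (fun m => hd0 _) hd2
        exact (tendsto_add_atTop_iff_nat (N₀+1)).mp h1
      have hxW : Tendsto (fun n => ‖y n - V 0 (y n)‖) atTop (𝓝 0) := by
        apply squeeze_zero (fun n => norm_nonneg _) (g := fun n => d n + K * b^n)
        · intro n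
          calc ‖y n - V 0 (y n)‖
              ≤ ‖y n - U n 0 (y n)‖ + ‖U n 0 (y n) - V 0 (y n)‖ := by
                rw [show (y n - V 0 (y n) : H) = (y n - U n 0 (y n)) + (U n 0 (y n) - V 0 (y n)) from by abel]
                exact norm_add_le _ _
            _ ≤ d n + K * b^n := by
                rw [norm_sub_rev]
                exact add_le_add (le_of_eq (by simp only [hddef])) (hWV n)
        · simpa using hdtend.add (hbp.const_mul K)
      have hkl := key_limsup hVne0 hxW hyb hfixg (show (0:ℝ) < τ*ε/8 by positivity)
      obtain ⟨N₁, hN₁⟩ := eventually_atTop.mp hkl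
      have hrec' : ∀ n, N₁ ≤ n → s (n+1) ≤ (1 - l n * τ)*s n + l n * τ * (ε/4) := by
        intro n hn
        have h1 := hrecA n
        have h2 : (⟪-(A z), y (n+1) - z⟫ : ℝ) < τ*ε/8 := hN₁ (n+1) (by omega)
        have h3 := mul_le_mul_of_nonneg_left h2.le (hl n).1
        nlinarith
      have := xu_aux hτ0 (fun n => (hl n).1) hfac hldiv N₁ hrec' (show (0:ℝ) < ε/4 by linarith)
      filter_upwards [this] with n hn
      linarith
    · -- infinitely many increases : Maingé argument
      have hinf : {k | s k < s (k+1)}.Infinite := hfin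
      obtain ⟨a₀, ha₀⟩ : ∃ a₀, s a₀ < s (a₀+1) := by
        obtain ⟨k, hk⟩ := hinf.nonempty; exact ⟨k, hk⟩
      set σ : ℕ → ℕ := fun n => Nat.findGreatest (fun k => s k < s (k+1)) n with hσdef
      have hσle : ∀ n, σ n ≤ n := fun n => Nat.findGreatest_le (P := fun k => s k < s (k+1)) n
      have hσP : ∀ n, a₀ ≤ n → s (σ n) < s (σ n + 1) := fun n hn =>
        Nat.findGreatest_spec (P := fun k => s k < s (k+1)) hn ha₀
      have hσtop : Tendsto σ atTop atTop := by
        rw [tendsto_atTop_atTop]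
        intro m
        obtain ⟨k, hkmem, hk1⟩ := hinf.exists_gt m
        refine ⟨k, fun n hn => ?_⟩
        have : k ≤ σ n := Nat.le_findGreatest (P := fun k => s k < s (k+1)) hn hkmem
        omega
      have hsσ : ∀ n, a₀ ≤ n → s n ≤ s (σ n + 1) := by
        intro n
        induction n with
        | zero =>
          intro hn
          have ha0 : a₀ = 0 := by omega
          have hP0 : s 0 < s 1 := by rw [ha0] at ha₀; exact ha₀
          have hσ0 : σ 0 = 0 := Nat.le_zero.mp (hσle 0)
          rw [hσ0]
          exact le_of_lt hP0
        | succ n ih =>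
          intro hn
          by_cases hPn1 : s (n+1) < s (n+2)
          · have hσeq : σ (n+1) = n+1 :=
              le_antisymm (hσle _) (Nat.le_findGreatest (P := fun k => s k < s (k+1)) le_rfl hPn1)
            rw [hσeq]
            exact le_of_lt hPn1
          · have hσeq : σ (n+1) = σ n := by
              rw [hσdef]
              simp only [Nat.findGreatest_succ]
              rw [if_neg]
              exact hPn1
            have hna : a₀ ≤ n := by
              by_contra hcon
              have : a₀ = n+1 := by omega
              rw [this] at ha₀
              exact hPn1 ha₀
            by_cases hPn : s n < s (n+1)
            · have hσn : σ n = n := le_antisymm (hσle n) (Nat.le_findGreatest (P := fun k => s k < s (k+1)) le_rfl hPn)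
              rw [hσeq, hσn]
            · have h1 : s (n+1) ≤ s n := not_lt.mp hPn
              rw [hσeq]
              exact le_trans h1 (ih hna)
      have hdσ2 : Tendsto (fun n => (d (σ n))^2) atTop (𝓝 0) := by
        apply squeeze_zero' (Eventually.of_forall fun n => sq_nonneg _)
          (g := fun n => (b/(1-b)) * (l (σ n) * C₁))
        · filter_upwards [eventually_ge_atTop a₀] with n hn
          have hB := hrecB (σ n)
          have hP := hσP n hn
          have h2 : ((1-b)/b) * (d (σ n))^2 ≤ l (σ n) * C₁ := by linarith
          have h3 := mul_le_mul_of_nonneg_left h2 hbb.le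
          have h4 : (b/(1-b)) * (((1-b)/b) * (d (σ n))^2) = (d (σ n))^2 :=
            div_cancel_aux hb0 hb _
          linarith
        · have := ((hl0.comp hσtop).mul_const C₁).const_mul (b/(1-b))
          simpa using this
      have hdσ : Tendsto (fun n => d (σ n)) atTop (𝓝 0) :=
        tendsto_of_sq_tendsto (fun n => hd0 _) hdσ2
      have hxWσ : Tendsto (fun n => ‖y (σ n) - V 0 (y (σ n))‖) atTop (𝓝 0) := by
        apply squeeze_zero (fun n => norm_nonneg _) (g := fun n => d (σ n) + K * b^(σ n))
        · intro n
          calc ‖y (σ n) - V 0 (y (σ n))‖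
              ≤ ‖y (σ n) - U (σ n) 0 (y (σ n))‖ + ‖U (σ n) 0 (y (σ n)) - V 0 (y (σ n))‖ := by
                rw [show (y (σ n) - V 0 (y (σ n)) : H)
                  = (y (σ n) - U (σ n) 0 (y (σ n))) + (U (σ n) 0 (y (σ n)) - V 0 (y (σ n))) from by abel]
                exact norm_add_le _ _
            _ ≤ d (σ n) + K * b^(σ n) := by
                rw [norm_sub_rev]
                exact add_le_add (le_of_eq (by simp only [hddef])) (hWV (σ n))
        · have : Tendsto (fun n => b^(σ n)) atTop (𝓝 0) := hbp.comp hσtop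
          simpa using hdσ.add (this.const_mul K)
      have hybσ : ∀ n, ‖y (σ n)‖ ≤ R + ‖z‖ := fun n => hyb _
      obtain ⟨ε₁, hε₁def⟩ : ∃ e : ℝ, e = min (τ*ε/16) (ε/8) := ⟨_, rfl⟩
      have hε₁0 : (0:ℝ) < ε₁ := by
        rw [hε₁def]
        exact lt_min (by positivity) (by linarith)
      have hkl := key_limsup hVne0 hxWσ hybσ hfixg hε₁0
      have hstepy : ∀ m, ‖y (m+1) - y m‖ ≤ d m + l m * C₂ := by
        intro m
        have he : y (m+1) - y m = (U m 0 (y m) - y m) - l m • A (U m 0 (y m)) := by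
          rw [hy m]; abel
        calc ‖y (m+1) - y m‖
            = ‖(U m 0 (y m) - y m) - l m • A (U m 0 (y m))‖ := by rw [he]
          _ ≤ ‖U m 0 (y m) - y m‖ + ‖l m • A (U m 0 (y m))‖ := norm_sub_le _ _
          _ ≤ d m + l m * C₂ := by
              rw [norm_smul, Real.norm_eq_abs, abs_of_nonneg (hl m).1]
              exact add_le_add (le_of_eq (by simp only [hddef])) (mul_le_mul_of_nonneg_left (hAW m) (hl m).1)
      have hβsmall : ∀ᶠ n in atTop, (⟪-(A z), y (σ n + 1) - z⟫ : ℝ) < 2*ε₁ := by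
        have hyy : Tendsto (fun n => ‖A z‖ * (d (σ n) + l (σ n) * C₂)) atTop (𝓝 0) := by
          have := (hdσ.add ((hl0.comp hσtop).mul_const C₂)).const_mul ‖A z‖
          simpa using this
        filter_upwards [hkl, hyy.eventually (eventually_lt_nhds hε₁0)] with n h1 h2
        have h3 : (⟪-(A z), y (σ n + 1) - z⟫ : ℝ)
            = ⟪-(A z), y (σ n) - z⟫ + ⟪-(A z), y (σ n + 1) - y (σ n)⟫ := by
          rw [← inner_add_right]
          congr 1
          abel
        have h4 : (⟪-(A z), y (σ n + 1) - y (σ n)⟫ : ℝ) ≤ ‖A z‖ * ‖y (σ n + 1) - y (σ n)‖ := by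
          calc (⟪-(A z), y (σ n + 1) - y (σ n)⟫ : ℝ)
              ≤ |(⟪-(A z), y (σ n + 1) - y (σ n)⟫ : ℝ)| := le_abs_self _
            _ ≤ ‖-(A z)‖ * ‖y (σ n + 1) - y (σ n)‖ := abs_real_inner_le_norm _ _
            _ = ‖A z‖ * ‖y (σ n + 1) - y (σ n)‖ := by rw [norm_neg]
        have h5 : ‖A z‖ * ‖y (σ n + 1) - y (σ n)‖ ≤ ‖A z‖ * (d (σ n) + l (σ n) * C₂) :=
          mul_le_mul_of_nonneg_left (hstepy (σ n)) (norm_nonneg _)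
        linarith
      have hlσ : Tendsto (fun n => l (σ n)) atTop (𝓝 0) := hl0.comp hσtop
      have hlev : ∀ᶠ n in atTop, 2 * (l (σ n)) * (‖A z‖ * R + 1) < ε₁ := by
        have h6 : Tendsto (fun n => 2 * (l (σ n)) * (‖A z‖ * R + 1)) atTop (𝓝 0) := by
          have := (hlσ.const_mul 2).mul_const (‖A z‖ * R + 1)
          simpa using this
        exact h6.eventually (eventually_lt_nhds hε₁0)
      have hfinal : ∀ᶠ n in atTop, s n ≤ 4*ε₁/τ + ε₁ := by
        filter_upwards [hβsmall, hlev, eventually_ge_atTop a₀] with n h1 h2 h3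
        have hPσ := hσP n h3
        have hA := hrecA (σ n)
        have hβb : (⟪-(A z), y (σ n + 1) - z⟫ : ℝ) ≤ ‖A z‖ * R := by
          calc (⟪-(A z), y (σ n + 1) - z⟫ : ℝ)
              ≤ |(⟪-(A z), y (σ n + 1) - z⟫ : ℝ)| := le_abs_self _
            _ ≤ ‖-(A z)‖ * ‖y (σ n + 1) - z‖ := abs_real_inner_le_norm _ _
            _ = ‖A z‖ * ‖y (σ n + 1) - z‖ := by rw [norm_neg]
            _ ≤ ‖A z‖ * R := mul_le_mul_of_nonneg_left (hbound (σ n + 1)) (norm_nonneg _)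
        have hts : τ * s (σ n) ≤ 2 * ⟪-(A z), y (σ n + 1) - z⟫ := by
          by_contra hcon
          push_neg at hcon
          have h5 : 0 < l (σ n) * (2*(⟪-(A z), y (σ n + 1) - z⟫:ℝ) - τ * s (σ n)) := by
            nlinarith
          have h6 : l (σ n) * (2*(⟪-(A z), y (σ n + 1) - z⟫:ℝ) - τ * s (σ n)) ≤ 0 :=
            mul_nonpos_of_nonneg_of_nonpos (hl (σ n)).1 (by linarith)
          linarith
        have hsσn : s (σ n) ≤ 4*ε₁/τ := by
          rw [le_div_iff₀ hτ0]
          nlinarith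
        have hlτs : 0 ≤ l (σ n) * τ * s (σ n) :=
          mul_nonneg (mul_nonneg (hl (σ n)).1 hτ0.le) (hs0 _)
        have h2lb : 2 * l (σ n) * (⟪-(A z), y (σ n + 1) - z⟫:ℝ) ≤ 2 * l (σ n) * (‖A z‖ * R) :=
          mul_le_mul_of_nonneg_left hβb (by linarith [(hl (σ n)).1])
        have hs1 : s (σ n + 1) ≤ s (σ n) + 2 * l (σ n) * (‖A z‖ * R) := by nlinarith
        have hs2 : 2 * l (σ n) * (‖A z‖ * R) ≤ ε₁ := by
          have h7 : 2 * l (σ n) * (‖A z‖ * R) ≤ 2 * l (σ n) * (‖A z‖ * R + 1) := by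
            nlinarith [(hl (σ n)).1]
          linarith
        have h8 := hsσ n h3
        linarith
      filter_upwards [hfinal] with n hn
      have hε₁a : ε₁ ≤ τ*ε/16 := by rw [hε₁def]; exact min_le_left _ _
      have hε₁b : ε₁ ≤ ε/8 := by rw [hε₁def]; exact min_le_right _ _
      have h7 : 4*ε₁/τ ≤ ε/4 := by
        rw [div_le_iff₀ hτ0]
        nlinarith
      linarith
  -- conclude
  have hs_tendsto : Tendsto s atTop (𝓝 0) := by
    rw [Metric.tendsto_atTop]
    intro ε hε
    obtain ⟨N, hN⟩ := eventually_atTop.mp (hmain ε hε)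
    refine ⟨N, fun n hn => ?_⟩
    rw [Real.dist_eq, sub_zero, abs_of_nonneg (hs0 n)]
    exact hN n hn
  rw [tendsto_iff_norm_sub_tendsto_zero]
  rw [hsdef] at hs_tendsto
  exact tendsto_of_sq_tendsto (fun n => norm_nonneg _) hs_tendsto
end

section
/- Let H be a real Hilbert space, {T_n} a sequence of nonexpansive self-mappings of H, {γ_n} a sequence in [a, b] with 0 < a ≤ b < 1, and for each n ∈ ℕ and k ∈ {1, …, n+1} define U_{n,k} : H → H by U_{n,n+1} = I and U_{n,k} = γ_k T_k U_{n,k+1} + (1 − γ_k) I. Set S_n = T_1 ∘ U_{n,2} for n ∈ ℕ. Then each S_n is nonexpansive, and if the T_k have a common fixed point, then ⋂_{n=1}^∞ Fix(S_n) = ⋂_{n=1}^∞ Fix(U_{n,1}) = ⋂_{n=1}^∞ ⋂_{k=1}^n Fix(T_k) = ⋂_{k=1}^∞ Fix(T_k), and for each n ∈ ℕ, U_{n,1} x = (1 − γ_1) x + γ_1 S_n x for all x ∈ H. -/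
open Filter Topology
open scoped RealInnerProductSpace

/-- Strict convexity in an inner product space. -/
lemma strict_convex_aux {H : Type*} [NormedAddCommGroup H] [InnerProductSpace ℝ H]
    (u v : H) (t : ℝ) (ht0 : 0 < t) (ht1 : t < 1)
    (hn : ‖u‖ = ‖v‖) (hc : ‖t • u + (1 - t) • v‖ = ‖v‖) : u = v := by
  have h1 := norm_add_sq_real (t • u) ((1 - t) • v)
  rw [norm_smul, norm_smul, real_inner_smul_left, real_inner_smul_right,
    Real.norm_eq_abs, Real.norm_eq_abs, abs_of_pos ht0, abs_of_pos (by linarith), hc] at h1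
  have hn2 : ‖u‖ ^ 2 = ‖v‖ ^ 2 := by rw [hn]
  have key : 2 * t * (1 - t) * (‖v‖ ^ 2 - (inner ℝ u v : ℝ)) = 0 := by
    linear_combination h1 + t ^ 2 * (‖u‖ + ‖v‖) * hn
  have huv : (inner ℝ u v : ℝ) = ‖v‖ ^ 2 := by
    nlinarith [key, mul_pos ht0 (by linarith : (0:ℝ) < 1 - t)]
  have h3 : ‖u - v‖ ^ 2 = 0 := by
    rw [norm_sub_sq_real]; linarith
  have h4 : ‖u - v‖ = 0 := by nlinarith [norm_nonneg (u - v)]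
  exact sub_eq_zero.mp (norm_eq_zero.mp h4)

/-- Properties of the W-mappings `U_{n,k} = γ_k T_k U_{n,k+1} + (1 - γ_k) I`
(here indexed from `0`) and of `S_n = T_0 ∘ U_{n,1}`: each `S_n` is nonexpansive,
the common fixed point sets of `{S_n}`, of `{U_{n,0}}`, and of `{T_k}` coincide
(provided the `T_k` have a common fixed point), and
`U_{n,0} x = (1 - γ_0) x + γ_0 S_n x`. -/
theorem W_mapping_properties
    {H : Type*} [NormedAddCommGroup H] [InnerProductSpace ℝ H] [CompleteSpace H]
    (T : ℕ → H → H) (hT : ∀ n, ∀ x y : H, ‖T n x - T n y‖ ≤ ‖x - y‖)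
    (a b : ℝ) (ha : 0 < a) (hab : a ≤ b) (hb : b < 1)
    (γ : ℕ → ℝ) (hγ : ∀ n, γ n ∈ Set.Icc a b)
    (U : ℕ → ℕ → H → H)
    (hU1 : ∀ n, U n (n + 1) = id)
    (hU2 : ∀ n k, k ≤ n → ∀ x : H, U n k x = γ k • T k (U n (k + 1) x) + (1 - γ k) • x)
    (S : ℕ → H → H) (hS : ∀ n (x : H), S n x = T 0 (U n 1 x)) :
    (∀ n, ∀ x y : H, ‖S n x - S n y‖ ≤ ‖x - y‖) ∧
    ((∃ p : H, ∀ k, T k p = p) →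
      (⋂ n, {x : H | S n x = x}) = (⋂ n, {x : H | U n 0 x = x}) ∧
      (⋂ n, {x : H | U n 0 x = x}) =
        (⋂ n, ⋂ k ∈ Finset.range (n + 1), {x : H | T k x = x}) ∧
      (⋂ n, ⋂ k ∈ Finset.range (n + 1), {x : H | T k x = x}) =
        (⋂ k, {x : H | T k x = x})) ∧
    (∀ n (x : H), U n 0 x = (1 - γ 0) • x + γ 0 • S n x) := by
  have hγ0 : ∀ k, 0 < γ k := fun k => lt_of_lt_of_le ha (hγ k).1
  have hγ1 : ∀ k, γ k < 1 := fun k => lt_of_le_of_lt (hγ k).2 hb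
  -- nonexpansiveness of `U n k`
  have hUnon : ∀ n d k, k + d = n + 1 → ∀ x y : H, ‖U n k x - U n k y‖ ≤ ‖x - y‖ := by
    intro n d
    induction d with
    | zero =>
      intro k hk x y
      have : k = n + 1 := by omega
      subst this; rw [hU1]; simp
    | succ d ih =>
      intro k hk x y
      have hkn : k ≤ n := by omega
      have ih' := ih (k + 1) (by omega) x y
      rw [hU2 n k hkn x, hU2 n k hkn y]
      have hre : γ k • T k (U n (k + 1) x) + (1 - γ k) • x -
          (γ k • T k (U n (k + 1) y) + (1 - γ k) • y)
          = γ k • (T k (U n (k + 1) x) - T k (U n (k + 1) y)) + (1 - γ k) • (x - y) := by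
        module
      rw [hre]
      have h1 := hT k (U n (k + 1) x) (U n (k + 1) y)
      calc ‖γ k • (T k (U n (k + 1) x) - T k (U n (k + 1) y)) + (1 - γ k) • (x - y)‖
          ≤ ‖γ k • (T k (U n (k + 1) x) - T k (U n (k + 1) y))‖ + ‖(1 - γ k) • (x - y)‖ :=
            norm_add_le _ _
        _ = γ k * ‖T k (U n (k + 1) x) - T k (U n (k + 1) y)‖ + (1 - γ k) * ‖x - y‖ := by
            rw [norm_smul, norm_smul, Real.norm_eq_abs, Real.norm_eq_abs, abs_of_pos (hγ0 k),
              abs_of_pos (by linarith [hγ1 k] : (0:ℝ) < 1 - γ k)]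
        _ ≤ γ k * ‖x - y‖ + (1 - γ k) * ‖x - y‖ := by nlinarith [hγ0 k]
        _ = ‖x - y‖ := by ring
  -- fixed points propagate down
  have hfix : ∀ (q : H) n d k, k + d = n + 1 → (∀ j, k ≤ j → j ≤ n → T j q = q) →
      U n k q = q := by
    intro q n d
    induction d with
    | zero =>
      intro k hk _
      have : k = n + 1 := by omega
      subst this; rw [hU1]; rfl
    | succ d ih =>
      intro k hk hq
      have hkn : k ≤ n := by omega
      have ih' : U n (k + 1) q = q := ih (k + 1) (by omega) (fun j hj hj' => hq j (by omega) hj')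
      rw [hU2 n k hkn q, ih', hq k le_rfl hkn]
      module
  -- the strict convexity step
  have step : ∀ (p : H), (∀ k, T k p = p) → ∀ n (x : H), ∀ k, k ≤ n →
      ‖U n k x - p‖ = ‖x - p‖ →
      ‖U n (k + 1) x - p‖ = ‖x - p‖ ∧ T k (U n (k + 1) x) = x := by
    intro p hp n x k hkn hnk
    have hUp : U n (k + 1) p = p := hfix p n (n - k) (k + 1) (by omega) (fun j _ _ => hp j)
    have hA : ‖U n (k + 1) x - p‖ ≤ ‖x - p‖ := by
      have := hUnon n (n - k) (k + 1) (by omega) x p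
      rwa [hUp] at this
    have hu : ‖T k (U n (k + 1) x) - p‖ ≤ ‖U n (k + 1) x - p‖ := by
      have := hT k (U n (k + 1) x) p
      rwa [hp k] at this
    have hcomb : U n k x - p
        = γ k • (T k (U n (k + 1) x) - p) + (1 - γ k) • (x - p) := by
      rw [hU2 n k hkn x]; module
    have hle : ‖U n k x - p‖ ≤ γ k * ‖T k (U n (k + 1) x) - p‖ + (1 - γ k) * ‖x - p‖ := by
      rw [hcomb]
      calc ‖γ k • (T k (U n (k + 1) x) - p) + (1 - γ k) • (x - p)‖
          ≤ ‖γ k • (T k (U n (k + 1) x) - p)‖ + ‖(1 - γ k) • (x - p)‖ := norm_add_le _ _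
        _ = γ k * ‖T k (U n (k + 1) x) - p‖ + (1 - γ k) * ‖x - p‖ := by
            rw [norm_smul, norm_smul, Real.norm_eq_abs, Real.norm_eq_abs, abs_of_pos (hγ0 k),
              abs_of_pos (by linarith [hγ1 k] : (0:ℝ) < 1 - γ k)]
    have hun : ‖T k (U n (k + 1) x) - p‖ = ‖x - p‖ := by
      have := hγ0 k
      nlinarith
    have h2 : ‖U n (k + 1) x - p‖ = ‖x - p‖ := le_antisymm hA (by linarith)
    refine ⟨h2, ?_⟩
    have heq := strict_convex_aux (T k (U n (k + 1) x) - p) (x - p) (γ k) (hγ0 k) (hγ1 k)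
      hun (by rw [← hcomb, hnk])
    exact sub_left_injective heq
  -- main: fixed point of U n 0 implies fixed point of every T k, k ≤ n
  have main : ∀ (p : H), (∀ k, T k p = p) → ∀ n (x : H), U n 0 x = x →
      (∀ k, k ≤ n + 1 → U n k x = x) ∧ (∀ k, k ≤ n → T k x = x) := by
    intro p hp n x hx0
    have hnorm : ∀ k, k ≤ n + 1 → ‖U n k x - p‖ = ‖x - p‖ := by
      intro k
      induction k with
      | zero => intro _; rw [hx0]
      | succ k ih =>
        intro hk
        exact (step p hp n x k (by omega) (ih (by omega))).1
    have hTU : ∀ k, k ≤ n → T k (U n (k + 1) x) = x := by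
      intro k hk
      exact (step p hp n x k hk (hnorm k (by omega))).2
    have hUx : ∀ k, k ≤ n + 1 → U n k x = x := by
      intro k hk
      rcases Nat.lt_or_ge k (n + 1) with h | h
      · have hkn : k ≤ n := by omega
        rw [hU2 n k hkn x, hTU k hkn]
        module
      · have : k = n + 1 := by omega
        subst this; rw [hU1]; rfl
    refine ⟨hUx, fun k hk => ?_⟩
    have := hTU k hk
    rwa [hUx (k + 1) (by omega)] at this
  refine ⟨?_, ?_, ?_⟩
  · -- S n nonexpansive
    intro n x y
    rw [hS n x, hS n y]
    calc ‖T 0 (U n 1 x) - T 0 (U n 1 y)‖ ≤ ‖U n 1 x - U n 1 y‖ := hT 0 _ _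
      _ ≤ ‖x - y‖ := hUnon n n 1 (by omega) x y
  · rintro ⟨p, hp⟩
    -- per-n equality of Fix(S n) and Fix(U n 0)
    have hSU : ∀ n, {x : H | S n x = x} = {x : H | U n 0 x = x} := by
      intro n
      ext x
      simp only [Set.mem_setOf_eq]
      constructor
      · intro hx
        rw [hU2 n 0 (Nat.zero_le n) x, ← hS n x, hx]
        module
      · intro hx
        have h := main p hp n x hx
        rw [hS n x, h.1 1 (by omega)]
        exact h.2 0 (Nat.zero_le n)
    have hUT : ∀ n, {x : H | U n 0 x = x}
        = ⋂ k ∈ Finset.range (n + 1), {x : H | T k x = x} := by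
      intro n
      ext x
      simp only [Set.mem_setOf_eq, Set.mem_iInter, Finset.mem_range]
      constructor
      · intro hx k hk
        exact (main p hp n x hx).2 k (by omega)
      · intro hx
        exact hfix x n (n + 1) 0 (by omega) (fun j _ hj => hx j (by omega))
    refine ⟨?_, ?_, ?_⟩
    · exact Set.iInter_congr hSU
    · exact Set.iInter_congr hUT
    · ext x
      simp only [Set.mem_iInter, Finset.mem_range, Set.mem_setOf_eq]
      constructor
      · intro h k
        exact h k k (by omega)
      · intro h n k _
        exact h k
  · intro n x
    rw [hS n x, hU2 n 0 (Nat.zero_le n) x]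
    exact add_comm _ _
end
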